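/- arXiv:1607.00355 — 10 statements merged into one kernel-verified Lean document; each statement's English description precedes it below -/
import Mathlib

section
/- For all u ∈ (0,1), the second derivative of φ satisfies 0 < φ''(u) < φ'(u)/u, where φ(u) = H((1 - √(1-u²))/2). -/
open Real

noncomputable def binEnt (q : ℝ) : ℝ := -(q * Real.logb 2 q) - (1 - q) * Real.logb 2 (1 - q)

noncomputable def Bh (q : ℝ) : ℝ := 2 * Real.sqrt (q * (1 - q))

noncomputable def phi (u : ℝ) : ℝ := binEnt ((1 - Real.sqrt (1 - u ^ 2)) / 2)

/-- artanh -/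
noncomputable def Atn (t : ℝ) : ℝ := (Real.log (1 + t) - Real.log (1 - t)) / 2

lemma hasDerivAt_Atn {t : ℝ} (h1 : -1 < t) (h2 : t < 1) :
    HasDerivAt Atn (1 / (1 - t ^ 2)) t := by
  have hp : (1 : ℝ) + t ≠ 0 := by linarith
  have hm : (1 : ℝ) - t ≠ 0 := by linarith
  have ha : HasDerivAt (fun x : ℝ => Real.log (1 + x)) (1 / (1 + t)) t := by
    simpa using HasDerivAt.log ((hasDerivAt_id t).const_add 1) hp
  have hb : HasDerivAt (fun x : ℝ => Real.log (1 - x)) ((-1) / (1 - t)) t := by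
    simpa [sub_eq_add_neg] using HasDerivAt.log ((hasDerivAt_id t).neg.const_add 1) hm
  have h := (ha.sub hb).div_const 2
  refine h.congr_deriv (Eq.symm ?_)
  have ht2 : (1:ℝ) - t ^ 2 ≠ 0 := by nlinarith
  field_simp
  ring

lemma Atn_pos {t : ℝ} (h1 : 0 < t) (h2 : t < 1) : 0 < Atn t := by
  have hp : 0 < Real.log (1 + t) := Real.log_pos (by linarith)
  have hm : Real.log (1 - t) < 0 := Real.log_neg (by linarith) (by linarith)
  unfold Atn; linarith

lemma Atn_zero : Atn 0 = 0 := by simp [Atn]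

lemma lt_Atn {t : ℝ} (h1 : 0 < t) (h2 : t < 1) : t < Atn t := by
  have H : StrictMonoOn (fun x => Atn x - x) (Set.Icc 0 t) := by
    apply strictMonoOn_of_deriv_pos (convex_Icc _ _)
    · intro x hx
      simp only [Set.mem_Icc] at hx
      exact ((hasDerivAt_Atn (by linarith) (by linarith)).sub
        (hasDerivAt_id x)).differentiableAt.continuousAt.continuousWithinAt
    · intro x hx
      rw [interior_Icc] at hx
      obtain ⟨hx0, hxt⟩ := hx
      have hd : HasDerivAt (fun y => Atn y - y) (1 / (1 - x ^ 2) - 1) x :=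
        (hasDerivAt_Atn (by linarith) (by linarith)).sub (hasDerivAt_id x)
      rw [hd.deriv]
      have hx2 : x ^ 2 < 1 := by nlinarith
      have hx2' : 0 < 1 - x ^ 2 := by linarith
      have : 1 < 1 / (1 - x ^ 2) := by
        rw [lt_div_iff₀ hx2']; nlinarith
      simpa using this
  have := H (Set.left_mem_Icc.2 h1.le) (Set.right_mem_Icc.2 h1.le) h1
  simp only [Atn_zero] at this
  linarith

lemma Atn_key {t : ℝ} (h1 : 0 < t) (h2 : t < 1) : (1 - t ^ 2) * Atn t < t := by
  have H : StrictMonoOn (fun x => x - (1 - x ^ 2) * Atn x) (Set.Icc 0 t) := by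
    apply strictMonoOn_of_deriv_pos (convex_Icc _ _)
    · intro x hx
      simp only [Set.mem_Icc] at hx
      have hA := hasDerivAt_Atn (show (-1:ℝ) < x by linarith) (by linarith)
      have hq : HasDerivAt (fun x : ℝ => 1 - x ^ 2) (-(2 * x)) x := by
        simpa [sub_eq_add_neg] using ((hasDerivAt_pow 2 x).neg.const_add 1)
      exact ((hasDerivAt_id x).sub (hq.mul hA)).differentiableAt.continuousAt.continuousWithinAt
    · intro x hx
      rw [interior_Icc] at hx
      obtain ⟨hx0, hxt⟩ := hx
      have hx1 : x < 1 := by linarith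
      have hA := hasDerivAt_Atn (by linarith) hx1
      have hq : HasDerivAt (fun x : ℝ => 1 - x ^ 2) (-(2 * x)) x := by
        simpa [sub_eq_add_neg] using ((hasDerivAt_pow 2 x).neg.const_add 1)
      have hd : HasDerivAt (fun y => y - (1 - y ^ 2) * Atn y)
          (1 - (-(2 * x) * Atn x + (1 - x ^ 2) * (1 / (1 - x ^ 2)))) x :=
        (hasDerivAt_id x).sub (hq.mul hA)
      rw [hd.deriv]
      have hx2' : 0 < 1 - x ^ 2 := by nlinarith
      have hApos := Atn_pos hx0 hx1
      have : (1 - x ^ 2) * (1 / (1 - x ^ 2)) = 1 := by field_simp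
      rw [this]
      nlinarith
  have := H (Set.left_mem_Icc.2 h1.le) (Set.right_mem_Icc.2 h1.le) h1
  simp only [Atn_zero] at this
  nlinarith

section derivs

/-- The candidate first derivative of phi. -/
noncomputable def phiD (x : ℝ) : ℝ :=
  x * Atn (Real.sqrt (1 - x ^ 2)) / (Real.sqrt (1 - x ^ 2) * Real.log 2)

lemma sqrt_facts {x : ℝ} (hx : x ∈ Set.Ioo (0:ℝ) 1) :
    0 < Real.sqrt (1 - x ^ 2) ∧ Real.sqrt (1 - x ^ 2) < 1 ∧
      Real.sqrt (1 - x ^ 2) ^ 2 = 1 - x ^ 2 := by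
  obtain ⟨h0, h1⟩ := hx
  have hlt : x ^ 2 < 1 := by nlinarith
  have hpos : 0 < 1 - x ^ 2 := by linarith
  have hsq : Real.sqrt (1 - x ^ 2) ^ 2 = 1 - x ^ 2 := Real.sq_sqrt hpos.le
  refine ⟨Real.sqrt_pos.2 hpos, ?_, hsq⟩
  have : Real.sqrt (1 - x ^ 2) < Real.sqrt 1 :=
    Real.sqrt_lt_sqrt hpos.le (by nlinarith)
  simpa using this

lemma hasDerivAt_sqrt_one_sub_sq {x : ℝ} (hx : x ∈ Set.Ioo (0:ℝ) 1) :
    HasDerivAt (fun y : ℝ => Real.sqrt (1 - y ^ 2))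
      (-x / Real.sqrt (1 - x ^ 2)) x := by
  obtain ⟨hs0, hs1, hsq⟩ := sqrt_facts hx
  have hne : (1 : ℝ) - x ^ 2 ≠ 0 := by nlinarith [hs0, hsq]
  have hin : HasDerivAt (fun y : ℝ => 1 - y ^ 2) (-(2 * x)) x := by
    simpa [sub_eq_add_neg] using ((hasDerivAt_pow 2 x).neg.const_add 1)
  have h := (Real.hasDerivAt_sqrt hne).comp x hin
  refine h.congr_deriv (Eq.symm ?_)
  field_simp

lemma phi_hasDerivAt {x : ℝ} (hx : x ∈ Set.Ioo (0:ℝ) 1) :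
    HasDerivAt phi (phiD x) x := by
  obtain ⟨hx0, hx1⟩ := hx
  obtain ⟨hs0, hs1, hsq⟩ := sqrt_facts ⟨hx0, hx1⟩
  set s := Real.sqrt (1 - x ^ 2) with hs
  -- inner function q
  have hqder : HasDerivAt (fun y : ℝ => (1 - Real.sqrt (1 - y ^ 2)) / 2)
      (x / (2 * s)) x := by
    have h := ((hasDerivAt_sqrt_one_sub_sq ⟨hx0, hx1⟩).neg.const_add 1).div_const 2
    refine h.congr_deriv (Eq.symm ?_)
    rw [← hs]
    have hsne : s ≠ 0 := hs0.ne'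
    field_simp
  set q : ℝ := (1 - s) / 2 with hq
  have hq0 : 0 < q := by rw [hq]; linarith
  have hq1 : q < 1 := by rw [hq]; linarith
  have hq1' : 0 < 1 - q := by linarith
  -- binEnt as a log expression
  have hBE : binEnt = fun p : ℝ =>
      (-(p * Real.log p) - (1 - p) * Real.log (1 - p)) / Real.log 2 := by
    funext p
    simp only [binEnt, Real.logb, div_eq_mul_inv]
    ring
  -- derivative of binEnt at q
  have hb1 : HasDerivAt (fun p : ℝ => p * Real.log p) (Real.log q + 1) q :=
    Real.hasDerivAt_mul_log hq0.ne'
  have hb2 : HasDerivAt (fun p : ℝ => (1 - p) * Real.log (1 - p))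
      (-(Real.log (1 - q) + 1)) q := by
    have hcomp := (Real.hasDerivAt_mul_log hq1'.ne').comp q
      ((hasDerivAt_id q).neg.const_add 1)
    refine hcomp.congr_deriv (Eq.symm ?_)
    ring
  have hbin : HasDerivAt binEnt
      ((Real.log (1 - q) - Real.log q) / Real.log 2) q := by
    rw [hBE]
    have h := (hb1.neg.sub hb2).div_const (Real.log 2)
    refine h.congr_deriv (Eq.symm ?_)
    ring
  -- chain rule
  have hchain := hbin.comp x hqder
  have heq : phi = binEnt ∘ fun y : ℝ => (1 - Real.sqrt (1 - y ^ 2)) / 2 := by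
    funext y; simp [phi, Function.comp]
  rw [heq]
  refine hchain.congr_deriv (Eq.symm ?_)
  -- value: log(1-q) - log q = log(1+s) - log(1-s) = 2 * Atn s
  have h1q : 1 - q = (1 + s) / 2 := by rw [hq]; ring
  have hlog1 : Real.log (1 - q) = Real.log (1 + s) - Real.log 2 := by
    rw [h1q, Real.log_div (by linarith) (by norm_num)]
  have hlog2 : Real.log q = Real.log (1 - s) - Real.log 2 := by
    rw [hq, Real.log_div (by linarith) (by norm_num)]
  have hlog2pos : (0:ℝ) < Real.log 2 := Real.log_pos (by norm_num)
  rw [phiD, hlog1, hlog2]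
  simp only [Atn, ← hs]
  field_simp
  ring

lemma phiD_hasDerivAt {u : ℝ} (hu : u ∈ Set.Ioo (0:ℝ) 1) :
    HasDerivAt phiD
      ((Atn (Real.sqrt (1 - u ^ 2)) - Real.sqrt (1 - u ^ 2)) /
        (Real.sqrt (1 - u ^ 2) ^ 3 * Real.log 2)) u := by
  obtain ⟨hu0, hu1⟩ := hu
  obtain ⟨hs0, hs1, hsq⟩ := sqrt_facts ⟨hu0, hu1⟩
  set s := Real.sqrt (1 - u ^ 2) with hs
  have hlog2pos : (0:ℝ) < Real.log 2 := Real.log_pos (by norm_num)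
  have hsder : HasDerivAt (fun y : ℝ => Real.sqrt (1 - y ^ 2)) (-u / s) u :=
    hasDerivAt_sqrt_one_sub_sq ⟨hu0, hu1⟩
  -- A ∘ sqrt(1-x^2)
  have hAder : HasDerivAt (fun y : ℝ => Atn (Real.sqrt (1 - y ^ 2)))
      (1 / (1 - s ^ 2) * (-u / s)) u :=
    by have := (hasDerivAt_Atn (by linarith) hs1).comp u hsder; exact this
  -- x / sqrt(1-x^2)
  have hdiv : HasDerivAt (fun y : ℝ => y / Real.sqrt (1 - y ^ 2))
      ((1 * s - u * (-u / s)) / s ^ 2) u :=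
    (hasDerivAt_id u).div hsder hs0.ne'
  -- phiD x = (x / sqrt(1-x^2)) * Atn (sqrt (1-x^2)) / log 2
  have heq : phiD = fun y : ℝ =>
      (y / Real.sqrt (1 - y ^ 2)) * Atn (Real.sqrt (1 - y ^ 2)) / Real.log 2 := by
    funext y
    simp only [phiD]
    ring
  rw [heq]
  have h := (hdiv.mul hAder).div_const (Real.log 2)
  refine h.congr_deriv (Eq.symm ?_)
  have hune : u ≠ 0 := hu0.ne'
  have h1s : (1:ℝ) - s ^ 2 = u ^ 2 := by rw [hsq]; ring
  rw [← hs, h1s]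
  have hsne : s ≠ 0 := hs0.ne'
  field_simp
  linear_combination (-Atn s) * hsq
end derivs

theorem phi_second_deriv_bounds (u : ℝ) (hu : u ∈ Set.Ioo (0:ℝ) 1) :
    0 < iteratedDeriv 2 phi u ∧ iteratedDeriv 2 phi u < deriv phi u / u := by
  obtain ⟨hu0, hu1⟩ := hu
  obtain ⟨hs0, hs1, hsq⟩ := sqrt_facts ⟨hu0, hu1⟩
  set s := Real.sqrt (1 - u ^ 2) with hs
  have hlog2pos : (0:ℝ) < Real.log 2 := Real.log_pos (by norm_num)
  -- deriv phi = phiD near u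
  have hmem : Set.Ioo (0:ℝ) 1 ∈ nhds u := (isOpen_Ioo).mem_nhds ⟨hu0, hu1⟩
  have hev : deriv phi =ᶠ[nhds u] phiD := by
    filter_upwards [hmem] with x hx
    exact (phi_hasDerivAt hx).deriv
  have hderiv1 : deriv phi u = phiD u := (phi_hasDerivAt ⟨hu0, hu1⟩).deriv
  have hderiv2 : iteratedDeriv 2 phi u = (Atn s - s) / (s ^ 3 * Real.log 2) := by
    rw [iteratedDeriv_succ, iteratedDeriv_one]
    rw [hev.deriv_eq]
    exact (phiD_hasDerivAt ⟨hu0, hu1⟩).deriv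
  have hAgt : s < Atn s := lt_Atn hs0 hs1
  have hkey : (1 - s ^ 2) * Atn s < s := Atn_key hs0 hs1
  have hs3 : 0 < s ^ 3 := by positivity
  constructor
  · rw [hderiv2]
    apply div_pos (by linarith) (by positivity)
  · rw [hderiv2, hderiv1]
    have hphiD : phiD u / u = Atn s / (s * Real.log 2) := by
      rw [phiD, ← hs]
      field_simp
    rw [hphiD]
    rw [div_lt_div_iff₀ (by positivity) (by positivity)]
    have hApos : 0 < Atn s := Atn_pos hs0 hs1
    have h3 : Atn s - s < Atn s * s ^ 2 := by nlinarith [hkey]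
    have h4 := mul_lt_mul_of_pos_right h3 (mul_pos hs0 hlog2pos)
    nlinarith [h4]
end

section
/- The function φ(u) = H((1 - √(1-u²))/2) is strictly convex on [0,1]. -/
open Real

noncomputable def psi (u : ℝ) : ℝ :=
  1 - ((1 - Real.sqrt (1 - u ^ 2)) * Real.log (1 - Real.sqrt (1 - u ^ 2)) +
      (1 + Real.sqrt (1 - u ^ 2)) * Real.log (1 + Real.sqrt (1 - u ^ 2))) / (2 * Real.log 2)

noncomputable def psi' (u : ℝ) : ℝ :=
  u * (Real.log (1 + Real.sqrt (1 - u ^ 2)) - Real.log (1 - Real.sqrt (1 - u ^ 2))) /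
    (Real.sqrt (1 - u ^ 2) * (2 * Real.log 2))

lemma log2_pos : (0:ℝ) < Real.log 2 := Real.log_pos (by norm_num)

lemma phi_eq_psi {u : ℝ} (hu : u ∈ Set.Icc (0:ℝ) 1) : phi u = psi u := by
  obtain ⟨hu0, hu1⟩ := hu
  have hle : (0:ℝ) ≤ 1 - u ^ 2 := by nlinarith
  set s := Real.sqrt (1 - u ^ 2) with hsdef
  have hs0 : 0 ≤ s := Real.sqrt_nonneg _
  have hs1 : s ≤ 1 := by
    rw [hsdef]; exact Real.sqrt_le_one.mpr (by nlinarith)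
  have hl2 : Real.log 2 ≠ 0 := log2_pos.ne'
  by_cases h : s = 1
  · simp only [phi, binEnt, psi, ← hsdef, h]
    norm_num
  · have h1 : (0:ℝ) < 1 - s := lt_of_le_of_ne (by linarith) (by intro hh; exact h (by linarith))
    have h2 : (0:ℝ) < 1 + s := by linarith
    simp only [phi, binEnt, psi, Real.logb, ← hsdef]
    rw [show (1 : ℝ) - (1 - s)/2 = (1+s)/2 by ring,
      Real.log_div h1.ne' two_ne_zero, Real.log_div h2.ne' two_ne_zero]
    field_simp
    ring

lemma continuous_psi : Continuous psi := by
  have h := Real.continuous_mul_log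
  have hs : Continuous fun u : ℝ => Real.sqrt (1 - u ^ 2) := by continuity
  have h1 : Continuous fun u : ℝ => (1 - Real.sqrt (1 - u ^ 2)) * Real.log (1 - Real.sqrt (1 - u ^ 2)) :=
    h.comp (continuous_const.sub hs)
  have h2 : Continuous fun u : ℝ => (1 + Real.sqrt (1 - u ^ 2)) * Real.log (1 + Real.sqrt (1 - u ^ 2)) :=
    h.comp (continuous_const.add hs)
  exact continuous_const.sub ((h1.add h2).div_const _)

lemma hasDerivAt_sqrt_aux {x : ℝ} (hx0 : 0 < x) (hx1 : x < 1) :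
    HasDerivAt (fun u : ℝ => Real.sqrt (1 - u ^ 2)) (-x / Real.sqrt (1 - x ^ 2)) x := by
  have hu2 : 0 < 1 - x ^ 2 := by nlinarith
  have hs0 : 0 < Real.sqrt (1 - x ^ 2) := Real.sqrt_pos.2 hu2
  have h1 : HasDerivAt (fun u : ℝ => 1 - u ^ 2) (-(2 * x)) x := by
    simpa using (hasDerivAt_pow 2 x).const_sub 1
  have := (Real.hasDerivAt_sqrt hu2.ne').comp x h1
  refine this.congr_deriv (Eq.symm ?_)
  field_simp

lemma hasDerivAt_psi {x : ℝ} (hx : x ∈ Set.Ioo (0:ℝ) 1) : HasDerivAt psi (psi' x) x := by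
  obtain ⟨hx0, hx1⟩ := hx
  have hu2 : 0 < 1 - x ^ 2 := by nlinarith
  set s := Real.sqrt (1 - x ^ 2) with hsdef
  have hs0 : 0 < s := Real.sqrt_pos.2 hu2
  have hs2 : s ^ 2 = 1 - x ^ 2 := Real.sq_sqrt hu2.le
  have hs1 : s < 1 := by nlinarith
  have h1 : (0:ℝ) < 1 - s := by linarith
  have h2 : (0:ℝ) < 1 + s := by linarith
  have hds : HasDerivAt (fun u : ℝ => Real.sqrt (1 - u ^ 2)) (-x / s) x :=
    hasDerivAt_sqrt_aux hx0 hx1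
  have H1 : HasDerivAt
      (fun u : ℝ => (1 - Real.sqrt (1 - u ^ 2)) * Real.log (1 - Real.sqrt (1 - u ^ 2)))
      ((Real.log (1 - s) + 1) * (-(-x / s))) x :=
    by have := (Real.hasDerivAt_mul_log h1.ne').comp x (hds.const_sub 1); exact this
  have H2 : HasDerivAt
      (fun u : ℝ => (1 + Real.sqrt (1 - u ^ 2)) * Real.log (1 + Real.sqrt (1 - u ^ 2)))
      ((Real.log (1 + s) + 1) * (-x / s)) x :=
    by have := (Real.hasDerivAt_mul_log h2.ne').comp x (hds.const_add 1); exact this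
  have := ((H1.add H2).div_const (2 * Real.log 2)).const_sub 1
  refine this.congr_deriv (Eq.symm ?_)
  simp only [psi', ← hsdef]
  have hl2 : Real.log 2 ≠ 0 := log2_pos.ne'
  field_simp
  ring

lemma hasDerivAt_psi' {x : ℝ} (hx : x ∈ Set.Ioo (0:ℝ) 1) :
    HasDerivAt psi'
      ((Real.log (1 + Real.sqrt (1 - x ^ 2)) - Real.log (1 - Real.sqrt (1 - x ^ 2)) -
        2 * Real.sqrt (1 - x ^ 2)) / (2 * Real.log 2 * Real.sqrt (1 - x ^ 2) ^ 3)) x := by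
  obtain ⟨hx0, hx1⟩ := hx
  have hu2 : 0 < 1 - x ^ 2 := by nlinarith
  set s := Real.sqrt (1 - x ^ 2) with hsdef
  have hs0 : 0 < s := Real.sqrt_pos.2 hu2
  have hs2 : s ^ 2 = 1 - x ^ 2 := Real.sq_sqrt hu2.le
  have hs1 : s < 1 := by nlinarith
  have h1 : (0:ℝ) < 1 - s := by linarith
  have h2 : (0:ℝ) < 1 + s := by linarith
  have hl2 : Real.log 2 ≠ 0 := log2_pos.ne'
  have hds : HasDerivAt (fun u : ℝ => Real.sqrt (1 - u ^ 2)) (-x / s) x :=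
    hasDerivAt_sqrt_aux hx0 hx1
  have Hlog1 : HasDerivAt (fun u : ℝ => Real.log (1 + Real.sqrt (1 - u ^ 2)))
      ((1 + s)⁻¹ * (-x / s)) x :=
    by have := (Real.hasDerivAt_log h2.ne').comp x (hds.const_add 1); exact this
  have Hlog2 : HasDerivAt (fun u : ℝ => Real.log (1 - Real.sqrt (1 - u ^ 2)))
      ((1 - s)⁻¹ * (-(-x / s))) x :=
    by have := (Real.hasDerivAt_log h1.ne').comp x (hds.const_sub 1); exact this
  have HN : HasDerivAt
      (fun u : ℝ => u * (Real.log (1 + Real.sqrt (1 - u ^ 2)) - Real.log (1 - Real.sqrt (1 - u ^ 2))))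
      (1 * (Real.log (1 + s) - Real.log (1 - s)) +
        x * ((1 + s)⁻¹ * (-x / s) - (1 - s)⁻¹ * (-(-x / s)))) x :=
    (hasDerivAt_id x).mul (Hlog1.sub Hlog2)
  have HM : HasDerivAt (fun u : ℝ => Real.sqrt (1 - u ^ 2) * (2 * Real.log 2))
      ((-x / s) * (2 * Real.log 2)) x := hds.mul_const _
  have hM : s * (2 * Real.log 2) ≠ 0 := by positivity
  have := HN.div HM hM
  refine this.congr_deriv (Eq.symm ?_)
  have hx2 : x ^ 2 = 1 - s ^ 2 := by linarith
  simp only [← hsdef]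
  field_simp
  rw [hx2]
  ring

lemma log_ratio_gt {s : ℝ} (h0 : 0 < s) (h1 : s < 1) :
    2 * s < Real.log (1 + s) - Real.log (1 - s) := by
  set F : ℝ → ℝ := fun t => Real.log (1 + t) - Real.log (1 - t) - 2 * t with hF
  have key : StrictMonoOn F (Set.Icc 0 s) := by
    apply strictMonoOn_of_deriv_pos (convex_Icc 0 s)
    · intro t ht
      obtain ⟨ht0, hts⟩ := ht
      have h1t : (0:ℝ) < 1 + t := by linarith
      have h2t : (0:ℝ) < 1 - t := by linarith
      have c1 : ContinuousAt (fun t : ℝ => Real.log (1 + t)) t :=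
        (Real.continuousAt_log h1t.ne').comp (by fun_prop)
      have c2 : ContinuousAt (fun t : ℝ => Real.log (1 - t)) t :=
        (Real.continuousAt_log h2t.ne').comp (by fun_prop)
      exact ((c1.sub c2).sub (by fun_prop)).continuousWithinAt
    · intro t ht
      rw [interior_Icc] at ht
      obtain ⟨ht0, hts⟩ := ht
      have h1t : (0:ℝ) < 1 + t := by linarith
      have h2t : (0:ℝ) < 1 - t := by linarith
      have d1 : HasDerivAt (fun t : ℝ => Real.log (1 + t)) ((1 + t)⁻¹ * 1) t :=
        (Real.hasDerivAt_log h1t.ne').comp t ((hasDerivAt_id t).const_add 1)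
      have d2 : HasDerivAt (fun t : ℝ => Real.log (1 - t)) ((1 - t)⁻¹ * (-1)) t :=
        (Real.hasDerivAt_log h2t.ne').comp t ((hasDerivAt_id t).const_sub 1)
      have d3 : HasDerivAt (fun t : ℝ => 2 * t) 2 t := by
        simpa using (hasDerivAt_id t).const_mul 2
      have hd : HasDerivAt F ((1 + t)⁻¹ * 1 - (1 - t)⁻¹ * (-1) - 2) t := (d1.sub d2).sub d3
      rw [hd.deriv]
      have : (1 + t)⁻¹ * 1 - (1 - t)⁻¹ * (-1) - 2 = 2 * t ^ 2 / ((1 + t) * (1 - t)) := by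
        field_simp; ring
      rw [this]
      positivity
  have h := key (Set.left_mem_Icc.mpr h0.le) (Set.right_mem_Icc.mpr h0.le) h0
  have hF0 : F 0 = 0 := by simp [hF]
  rw [hF0] at h
  simp only [hF] at h
  linarith

theorem phi_strictConvex : StrictConvexOn ℝ (Set.Icc (0:ℝ) 1) phi := by
  have hpsi : StrictConvexOn ℝ (Set.Icc (0:ℝ) 1) psi := by
    apply strictConvexOn_of_deriv2_pos (convex_Icc 0 1) continuous_psi.continuousOn
    intro x hx
    rw [interior_Icc] at hx
    have hev : deriv psi =ᶠ[nhds x] psi' := by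
      filter_upwards [Ioo_mem_nhds hx.1 hx.2] with u hu
      exact (hasDerivAt_psi hu).deriv
    show 0 < deriv (deriv psi) x
    rw [hev.deriv_eq, (hasDerivAt_psi' hx).deriv]
    have hu2 : 0 < 1 - x ^ 2 := by obtain ⟨a, b⟩ := hx; nlinarith
    have hs0 : 0 < Real.sqrt (1 - x ^ 2) := Real.sqrt_pos.2 hu2
    have hs2 : Real.sqrt (1 - x ^ 2) ^ 2 = 1 - x ^ 2 := Real.sq_sqrt hu2.le
    have hs1 : Real.sqrt (1 - x ^ 2) < 1 := by nlinarith [hx.1]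
    have hgt := log_ratio_gt hs0 hs1
    apply div_pos (by linarith) (by positivity)
  exact hpsi.congr fun u hu => (phi_eq_psi hu).symm
end

section
/- The function ψ(w) = φ(√w) = H((1 - √(1-w))/2) is strictly concave on [0,1]. -/
open Real Set

lemma binEnt_eq (q : ℝ) :
    binEnt q = (Real.negMulLog q + Real.negMulLog (1 - q)) / Real.log 2 := by
  simp only [binEnt, Real.negMulLog, Real.logb]
  ring

/-- Key inequality: `log (1+s) - log (1-s) < 2*s/(1-s^2)` for `0 < s < 1`. -/
lemma key_ineq {s : ℝ} (hs0 : 0 < s) (hs1 : s < 1) :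
    Real.log (1 + s) - Real.log (1 - s) < 2 * s / (1 - s ^ 2) := by
  set h : ℝ → ℝ := fun t => 2 * t / (1 - t ^ 2) - (Real.log (1 + t) - Real.log (1 - t)) with hh
  have hd : ∀ x ∈ Set.Ioo (0:ℝ) 1, 0 < deriv h x := by
    intro x hx
    obtain ⟨hx0, hx1⟩ := hx
    have h1x : (0:ℝ) < 1 + x := by linarith
    have h1x' : (0:ℝ) < 1 - x := by linarith
    have hd2 : (1:ℝ) - x ^ 2 ≠ 0 := by nlinarith
    have hnum : HasDerivAt (fun t : ℝ => 2 * t) 2 x := by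
      simpa using (hasDerivAt_id x).const_mul 2
    have hden : HasDerivAt (fun t : ℝ => 1 - t ^ 2) (-(2 * x)) x := by
      simpa using (hasDerivAt_pow 2 x).const_sub 1
    have hA : HasDerivAt (fun t : ℝ => 2 * t / (1 - t ^ 2))
        ((2 * (1 - x ^ 2) - 2 * x * (-(2 * x))) / (1 - x ^ 2) ^ 2) x := hnum.div hden hd2
    have hB : HasDerivAt (fun t : ℝ => Real.log (1 + t)) (1 / (1 + x)) x := by
      have := ((hasDerivAt_id x).const_add 1).log (by positivity)
      simpa using this
    have hC : HasDerivAt (fun t : ℝ => Real.log (1 - t)) (-1 / (1 - x)) x := by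
      have := ((hasDerivAt_id x).const_sub 1).log (by positivity)
      simpa using this
    have hD : HasDerivAt h
        ((2 * (1 - x ^ 2) - 2 * x * (-(2 * x))) / (1 - x ^ 2) ^ 2 - (1 / (1 + x) - -1 / (1 - x))) x :=
      hA.sub (hB.sub hC)
    rw [hD.deriv]
    have : (2 * (1 - x ^ 2) - 2 * x * (-(2 * x))) / (1 - x ^ 2) ^ 2 - (1 / (1 + x) - -1 / (1 - x))
        = 4 * x ^ 2 / (1 - x ^ 2) ^ 2 := by
      field_simp
      ring
    rw [this]
    positivity
  have hcont : ContinuousOn h (Set.Ico (0:ℝ) 1) := by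
    intro x hx
    obtain ⟨hx0, hx1⟩ := hx
    have hne : (1:ℝ) - x ^ 2 ≠ 0 := by nlinarith
    have hne1 : (1:ℝ) + x ≠ 0 := by positivity
    have hne2 : (1:ℝ) - x ≠ 0 := by intro hc; nlinarith
    apply ContinuousWithinAt.sub
    · exact ((continuous_const.mul continuous_id).continuousWithinAt).div
        ((continuous_const.sub (continuous_pow 2)).continuousWithinAt) (by simpa using hne)
    · exact (((continuous_const.add continuous_id).continuousWithinAt).log (by simpa using hne1)).sub
        (((continuous_const.sub continuous_id).continuousWithinAt).log (by simpa using hne2))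
  have hmono : StrictMonoOn h (Set.Ico (0:ℝ) 1) := by
    apply strictMonoOn_of_deriv_pos (convex_Ico 0 1) hcont
    rwa [interior_Ico]
  have h0 : h 0 = 0 := by simp [hh]
  have := hmono ⟨le_refl 0, one_pos⟩ ⟨hs0.le, hs1⟩ hs0
  rw [h0] at this
  simp only [hh] at this
  linarith

/-- `g s = (log (1+s) - log (1-s)) / s` is strictly increasing on `(0,1)`. -/
lemma g_strictMono :
    StrictMonoOn (fun s : ℝ => (Real.log (1 + s) - Real.log (1 - s)) / s) (Set.Ioo 0 1) := by
  apply strictMonoOn_of_deriv_pos (convex_Ioo 0 1)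
  · intro x hx
    obtain ⟨hx0, hx1⟩ := hx
    have hne1 : (1:ℝ) + x ≠ 0 := by positivity
    have hne2 : (1:ℝ) - x ≠ 0 := by intro hc; nlinarith
    exact ((((continuous_const.add continuous_id).continuousWithinAt).log (by simpa using hne1)).sub
      (((continuous_const.sub continuous_id).continuousWithinAt).log (by simpa using hne2))).div
      continuousWithinAt_id (ne_of_gt hx0)
  · rw [interior_Ioo]
    intro x hx
    obtain ⟨hx0, hx1⟩ := hx
    have h1x : (0:ℝ) < 1 + x := by linarith
    have h1x' : (0:ℝ) < 1 - x := by linarith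
    have hB : HasDerivAt (fun t : ℝ => Real.log (1 + t)) (1 / (1 + x)) x := by
      have := ((hasDerivAt_id x).const_add 1).log (by positivity)
      simpa using this
    have hC : HasDerivAt (fun t : ℝ => Real.log (1 - t)) (-1 / (1 - x)) x := by
      have := ((hasDerivAt_id x).const_sub 1).log (by positivity)
      simpa using this
    have hD : HasDerivAt (fun s : ℝ => (Real.log (1 + s) - Real.log (1 - s)) / s)
        (((1 / (1 + x) - -1 / (1 - x)) * x - (Real.log (1 + x) - Real.log (1 - x)) * 1) / x ^ 2) x :=
      (hB.sub hC).div (hasDerivAt_id x) (ne_of_gt hx0)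
    rw [hD.deriv]
    have key := key_ineq hx0 hx1
    have hnum : (Real.log (1 + x) - Real.log (1 - x)) < (1 / (1 + x) - -1 / (1 - x)) * x := by
      have hd2 : (1:ℝ) - x ^ 2 ≠ 0 := by nlinarith
      have : (1 / (1 + x) - -1 / (1 - x)) * x = 2 * x / (1 - x ^ 2) := by
        field_simp
        ring
      rw [this]; exact key
    have hx2 : (0:ℝ) < x ^ 2 := by positivity
    apply div_pos _ hx2
    linarith

/-- The derivative of `ψ` at `w ∈ (0,1)`. -/
lemma psi_hasDeriv {w : ℝ} (hw : w ∈ Set.Ioo (0:ℝ) 1) :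
    HasDerivAt (fun w => phi (Real.sqrt w))
      ((Real.log (1 + Real.sqrt (1 - w)) - Real.log (1 - Real.sqrt (1 - w))) / Real.sqrt (1 - w)
        / (4 * Real.log 2)) w := by
  obtain ⟨hw0, hw1⟩ := hw
  set s := Real.sqrt (1 - w) with hs
  have h1w : (0:ℝ) < 1 - w := by linarith
  have hs0 : 0 < s := Real.sqrt_pos.2 h1w
  have hs1 : s < 1 := by
    have : Real.sqrt (1 - w) < Real.sqrt 1 := Real.sqrt_lt_sqrt (by linarith) (by linarith)
    simpa [hs] using this
  have hq0 : (0:ℝ) < (1 - s) / 2 := by linarith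
  have hq1 : (0:ℝ) < 1 - (1 - s) / 2 := by linarith
  -- derivative of s(w) = sqrt (1 - w)
  have hS : HasDerivAt (fun w : ℝ => Real.sqrt (1 - w)) (1 / (2 * s) * -1) w :=
    (Real.hasDerivAt_sqrt (ne_of_gt h1w)).comp w ((hasDerivAt_id w).const_sub 1)
  -- derivative of q(w) = (1 - s(w))/2
  have hQ : HasDerivAt (fun w : ℝ => (1 - Real.sqrt (1 - w)) / 2)
      (-(1 / (2 * s) * -1) / 2) w := (hS.const_sub 1).div_const 2
  have hN1 : HasDerivAt (fun w : ℝ => Real.negMulLog ((1 - Real.sqrt (1 - w)) / 2))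
      ((-Real.log ((1 - s) / 2) - 1) * (-(1 / (2 * s) * -1) / 2)) w :=
    by have := (Real.hasDerivAt_negMulLog (ne_of_gt hq0)).comp w hQ; exact this
  have hN2 : HasDerivAt (fun w : ℝ => Real.negMulLog (1 - (1 - Real.sqrt (1 - w)) / 2))
      ((-Real.log (1 - (1 - s) / 2) - 1) * (-(-(1 / (2 * s) * -1) / 2))) w :=
    by have := (Real.hasDerivAt_negMulLog (ne_of_gt hq1)).comp w (hQ.const_sub 1); exact this
  have hF : HasDerivAt (fun w : ℝ =>
      (Real.negMulLog ((1 - Real.sqrt (1 - w)) / 2)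
        + Real.negMulLog (1 - (1 - Real.sqrt (1 - w)) / 2)) / Real.log 2)
      (((-Real.log ((1 - s) / 2) - 1) * (-(1 / (2 * s) * -1) / 2)
        + (-Real.log (1 - (1 - s) / 2) - 1) * (-(-(1 / (2 * s) * -1) / 2))) / Real.log 2) w :=
    (hN1.add hN2).div_const _
  have heq : (fun w : ℝ => phi (Real.sqrt w)) =ᶠ[nhds w] (fun w : ℝ =>
      (Real.negMulLog ((1 - Real.sqrt (1 - w)) / 2)
        + Real.negMulLog (1 - (1 - Real.sqrt (1 - w)) / 2)) / Real.log 2) := by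
    filter_upwards [eventually_gt_nhds hw0] with x hx
    rw [phi, Real.sq_sqrt hx.le, binEnt_eq]
  have := hF.congr_of_eventuallyEq heq
  refine this.congr_deriv ?_
  symm
  have e1 : (1:ℝ) - (1 - s) / 2 = (1 + s) / 2 := by ring
  rw [e1, Real.log_div (by linarith : (0:ℝ) < 1 + s).ne' (by norm_num),
    Real.log_div (by linarith : (0:ℝ) < 1 - s).ne' (by norm_num)]
  have hl2 : Real.log 2 ≠ 0 := (Real.log_pos (by norm_num)).ne'
  field_simp [hs0.ne']
  ring_nf

theorem psi_strictConcave :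
    StrictConcaveOn ℝ (Set.Icc (0:ℝ) 1) (fun w => phi (Real.sqrt w)) := by
  apply StrictAntiOn.strictConcaveOn_of_deriv (convex_Icc 0 1)
  · -- continuity
    have : (fun w => phi (Real.sqrt w)) = fun w =>
        (Real.negMulLog ((1 - Real.sqrt (1 - Real.sqrt w ^ 2)) / 2)
          + Real.negMulLog (1 - (1 - Real.sqrt (1 - Real.sqrt w ^ 2)) / 2)) / Real.log 2 := by
      funext w
      rw [phi, binEnt_eq]
    rw [this]
    apply Continuous.continuousOn
    have hm : Continuous fun w : ℝ => (1 - Real.sqrt (1 - Real.sqrt w ^ 2)) / 2 := by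
      continuity
    exact ((Real.continuous_negMulLog.comp hm).add
      (Real.continuous_negMulLog.comp (continuous_const.sub hm))).div_const _
  · rw [interior_Icc]
    intro a ha b hb hab
    rw [(psi_hasDeriv ha).deriv, (psi_hasDeriv hb).deriv]
    obtain ⟨ha0, ha1⟩ := ha
    obtain ⟨hb0, hb1⟩ := hb
    have hsa0 : 0 < Real.sqrt (1 - a) := Real.sqrt_pos.2 (by linarith)
    have hsa1 : Real.sqrt (1 - a) < 1 := by
      have : Real.sqrt (1 - a) < Real.sqrt 1 := Real.sqrt_lt_sqrt (by linarith) (by linarith)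
      simpa using this
    have hsb0 : 0 < Real.sqrt (1 - b) := Real.sqrt_pos.2 (by linarith)
    have hsb1 : Real.sqrt (1 - b) < 1 := by
      have : Real.sqrt (1 - b) < Real.sqrt 1 := Real.sqrt_lt_sqrt (by linarith) (by linarith)
      simpa using this
    have hslt : Real.sqrt (1 - b) < Real.sqrt (1 - a) :=
      Real.sqrt_lt_sqrt (by linarith) (by linarith)
    have := g_strictMono ⟨hsb0, hsb1⟩ ⟨hsa0, hsa1⟩ hslt
    have h4 : (0:ℝ) < 4 * Real.log 2 := by
      have := Real.log_pos (by norm_num : (1:ℝ) < 2)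
      linarith
    gcongr
end

section
/- For all q ∈ [0,1], H(q) ≤ 2√(q(1-q)), with equality if and only if q ∈ {0, 1/2, 1}. -/
open Real

open Set

lemma aux1 {t : ℝ} (ht : 1 < t) : 2 * Real.log t < t - t⁻¹ := by
  have hmono : StrictMonoOn (fun t : ℝ => t - t⁻¹ - 2 * Real.log t) (Ici 1) := by
    apply strictMonoOn_of_deriv_pos (convex_Ici 1)
    · apply ContinuousOn.sub
      · exact continuousOn_id.sub (continuousOn_id.inv₀ (fun x hx => by
          have : (1:ℝ) ≤ x := hx; positivity))
      · exact (Real.continuousOn_log.mono (fun x hx => by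
          simp only [Set.mem_compl_iff, Set.mem_singleton_iff]
          have : (1:ℝ) ≤ x := hx; intro h; simp [h] at this; linarith)).const_smul 2 |>.congr
          (fun x hx => by simp [smul_eq_mul])
    · intro x hx
      rw [interior_Ici] at hx
      have hx1 : (1:ℝ) < x := hx
      have hx0 : x ≠ 0 := ne_of_gt (by linarith)
      have hd : HasDerivAt (fun t : ℝ => t - t⁻¹ - 2 * Real.log t)
          (1 - (-(x^2)⁻¹) - 2 * x⁻¹) x := by
        exact ((hasDerivAt_id x).sub (hasDerivAt_inv hx0)).sub
          ((Real.hasDerivAt_log hx0).const_mul 2)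
      rw [hd.deriv]
      have : 1 - (-(x^2)⁻¹) - 2*x⁻¹ = (x-1)^2 / x^2 := by field_simp; ring
      rw [this]; apply div_pos (by nlinarith) (by nlinarith)
  have := hmono (self_mem_Ici) (mem_Ici.mpr ht.le) ht
  simp at this
  linarith

lemma logq_bound {q : ℝ} (h0 : 0 < q) (h1 : q < 1) :
    -(q * Real.log q) < Real.sqrt q * (1 - q) := by
  have hs0 : 0 < Real.sqrt q := Real.sqrt_pos.mpr h0
  have hsq : Real.sqrt q ^ 2 = q := Real.sq_sqrt h0.le
  have hs1 : Real.sqrt q < 1 := by nlinarith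
  have ht : 1 < (Real.sqrt q)⁻¹ := ((one_lt_inv₀ hs0).mpr hs1)
  have h := aux1 ht
  rw [Real.log_inv, Real.log_sqrt h0.le, inv_inv] at h
  -- h : 2 * -(Real.log q / 2) < (√q)⁻¹ - √q
  have h2 : Real.sqrt q * (2 * -(Real.log q / 2)) < Real.sqrt q * ((Real.sqrt q)⁻¹ - Real.sqrt q) :=
    mul_lt_mul_of_pos_left h hs0
  rw [mul_sub, mul_inv_cancel₀ (ne_of_gt hs0)] at h2
  nlinarith [mul_lt_mul_of_pos_left h2 hs0]

lemma F_pos {q : ℝ} (hl : 1/2 < q) (h1 : q < 1) :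
    4*q - 2 < Real.log q - Real.log (1-q) := by
  have hmono : StrictMonoOn (fun x : ℝ => Real.log x - Real.log (1-x) - (4*x - 2))
      (Ico (1/2) 1) := by
    apply strictMonoOn_of_deriv_pos (convex_Ico _ _)
    · intro x hx
      obtain ⟨hxa, hxb⟩ := hx
      apply ContinuousAt.continuousWithinAt
      have c1 : ContinuousAt Real.log x := Real.continuousAt_log (by linarith)
      have c2 : ContinuousAt (fun x : ℝ => Real.log (1-x)) x :=
        (Real.continuousAt_log (by intro h; linarith [sub_eq_zero.mp h])).comp
          (by fun_prop)
      exact (c1.sub c2).sub (by fun_prop)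
    · intro x hx
      rw [interior_Ico] at hx
      obtain ⟨hxa, hxb⟩ := hx
      have hx0 : x ≠ 0 := by intro h; rw [h] at hxa; linarith
      have hx1 : (1:ℝ) - x ≠ 0 := by intro h; have := sub_eq_zero.mp h; linarith
      have hd : HasDerivAt (fun x : ℝ => Real.log x - Real.log (1-x) - (4*x - 2))
          (x⁻¹ - (1-x)⁻¹ * (-1) - 4 * 1) x := by
        apply HasDerivAt.sub
        apply HasDerivAt.sub (Real.hasDerivAt_log hx0)
        · exact (Real.hasDerivAt_log hx1).comp x ((hasDerivAt_id x).const_sub 1)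
        · exact ((hasDerivAt_id x).const_mul 4).sub_const 2
      rw [hd.deriv]
      have key : x⁻¹ - (1-x)⁻¹ * (-1) - 4*1 = (2*x-1)^2 / (x*(1-x)) := by
        field_simp; ring
      rw [key]
      apply div_pos (by nlinarith) (by nlinarith)
  have h := hmono (left_mem_Ico.mpr (by norm_num)) (mem_Ico.mpr ⟨hl.le, h1⟩) hl
  norm_num at h
  linarith

lemma pinsker_half {q : ℝ} (hl : 1/2 < q) (h1 : q < 1) :
    2*(q-1/2)^2 < q * Real.log (2*q) + (1-q) * Real.log (2*(1-q)) := by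
  have hmono : StrictMonoOn
      (fun x : ℝ => x * Real.log (2*x) + (1-x) * Real.log (2*(1-x)) - 2*(x-1/2)^2)
      (Ico (1/2) 1) := by
    apply strictMonoOn_of_deriv_pos (convex_Ico _ _)
    · intro x hx
      obtain ⟨hxa, hxb⟩ := hx
      apply ContinuousAt.continuousWithinAt
      have c1 : ContinuousAt (fun x : ℝ => Real.log (2*x)) x :=
        (Real.continuousAt_log (by intro h; nlinarith)).comp (by fun_prop)
      have c2 : ContinuousAt (fun x : ℝ => Real.log (2*(1-x))) x :=
        (Real.continuousAt_log (by intro h; linarith)).comp (by fun_prop)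
      fun_prop
    · intro x hx
      rw [interior_Ico] at hx
      obtain ⟨hxa, hxb⟩ := hx
      have hx0 : (2:ℝ)*x ≠ 0 := by intro h; nlinarith
      have hx1 : (2:ℝ)*(1-x) ≠ 0 := by intro h; nlinarith
      have i1 : HasDerivAt (fun y : ℝ => 2*y) 2 x := by
        simpa using (hasDerivAt_id x).const_mul 2
      have i2 : HasDerivAt (fun y : ℝ => 2*(1-y)) (2 * -1) x := by
        exact ((hasDerivAt_id x).const_sub 1).const_mul 2
      have hd : HasDerivAt
          (fun x : ℝ => x * Real.log (2*x) + (1-x) * Real.log (2*(1-x)) - 2*(x-1/2)^2)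
          (1 * Real.log (2*x) + x * ((2*x)⁻¹ * 2) +
            ((-1) * Real.log (2*(1-x)) + (1-x) * ((2*(1-x))⁻¹ * (2 * -1))) -
            2 * (2 * (x-1/2)^1 * 1)) x := by
        apply HasDerivAt.sub
        · apply HasDerivAt.add
          · exact (hasDerivAt_id x).mul ((Real.hasDerivAt_log hx0).comp x i1)
          · exact ((hasDerivAt_id x).const_sub 1).mul
              (by have h := (Real.hasDerivAt_log hx1).comp x i2; exact h)
        · exact (((hasDerivAt_id x).sub_const (1/2)).pow 2).const_mul 2
      rw [hd.deriv]
      have e1 : Real.log (2*x) = Real.log 2 + Real.log x :=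
        Real.log_mul (by norm_num) (by intro h; rw [h] at hxa; linarith)
      have e2 : Real.log (2*(1-x)) = Real.log 2 + Real.log (1-x) :=
        Real.log_mul (by norm_num) (by intro h; nlinarith [sub_eq_zero.mp h])
      have hxx : x ≠ 0 := by intro h; rw [h] at hxa; linarith
      have hxx1 : (1:ℝ) - x ≠ 0 := by intro h; nlinarith [sub_eq_zero.mp h]
      have hF := F_pos hxa hxb
      have key : 1 * Real.log (2*x) + x * ((2*x)⁻¹ * 2) +
            ((-1) * Real.log (2*(1-x)) + (1-x) * ((2*(1-x))⁻¹ * (2 * -1))) -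
            2 * (2 * (x-1/2)^1 * 1)
          = Real.log x - Real.log (1-x) - (4*x - 2) := by
        rw [e1, e2]
        field_simp
        ring
      rw [key]
      linarith
  have h := hmono (left_mem_Ico.mpr (by norm_num)) (mem_Ico.mpr ⟨hl.le, h1⟩) hl
  norm_num at h
  linarith

lemma pinsker {q : ℝ} (h0 : 0 < q) (h1 : q < 1) (hne : q ≠ 1/2) :
    2*(q-1/2)^2 < q * Real.log (2*q) + (1-q) * Real.log (2*(1-q)) := by
  rcases lt_or_gt_of_ne hne with h | h
  · have := pinsker_half (q := 1-q) (by linarith) (by linarith)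
    rw [show (1:ℝ)-(1-q) = q by ring] at this
    nlinarith [this]
  · exact pinsker_half h h1

set_option maxHeartbeats 2000000 in
lemma main_strict {q : ℝ} (h0 : 0 < q) (h1 : q < 1) (hne : q ≠ 1/2) :
    -(q * Real.log q) - (1-q) * Real.log (1-q) < 2 * Real.log 2 * Real.sqrt (q*(1-q)) := by
  have hL1 : (0.6931471803:ℝ) < Real.log 2 := Real.log_two_gt_d9
  have hL2 : Real.log 2 < 0.6931471808 := Real.log_two_lt_d9
  set L := Real.log 2 with hL
  have hLa : (0.69:ℝ) < L := by linarith
  have hLb : L < (0.6932:ℝ) := by linarith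
  have hsqa : (0.4761:ℝ) < L^2 := by nlinarith
  have hsqb : L^2 < (0.4806:ℝ) := by nlinarith
  have h4a : (0.2266:ℝ) < L^4 := by nlinarith
  have hv0 : (0:ℝ) ≤ q*(1-q) := by nlinarith
  have hvs : Real.sqrt (q*(1-q)) ^ 2 = q*(1-q) := Real.sq_sqrt hv0
  have hvnn : 0 ≤ Real.sqrt (q*(1-q)) := Real.sqrt_nonneg _
  by_cases hcase : (q-1/2)^2 ≤ L - L^2
  · -- Pinsker region
    have hD := pinsker h0 h1 hne
    have hid : -(q * Real.log q) - (1-q) * Real.log (1-q)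
        = L - (q * Real.log (2*q) + (1-q) * Real.log (2*(1-q))) := by
      rw [Real.log_mul (by norm_num) (ne_of_gt h0),
          Real.log_mul (by norm_num) (by intro h; nlinarith [sub_eq_zero.mp h])]
      ring
    have hstep : -(q * Real.log q) - (1-q) * Real.log (1-q) < L - 2*(q-1/2)^2 := by
      rw [hid]; linarith
    have ha : 0 ≤ L - 2*(q-1/2)^2 := by linarith [hcase, hsqa, hLb]
    have hb2 : (L - 2*(q-1/2)^2)^2 ≤ (2 * L * Real.sqrt (q*(1-q)))^2 := by
      have he : (2 * L * Real.sqrt (q*(1-q)))^2 = 4 * L^2 * (q*(1-q)) := by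
        rw [mul_pow, mul_pow, hvs]; ring
      rw [he]
      have hm := mul_le_mul_of_nonneg_left hcase (sq_nonneg (q-1/2))
      nlinarith [hm]
    have hbnn : 0 ≤ 2 * L * Real.sqrt (q*(1-q)) :=
      mul_nonneg (by linarith) hvnn
    have hble : L - 2*(q-1/2)^2 ≤ 2 * L * Real.sqrt (q*(1-q)) := by
      have h := Real.sqrt_le_sqrt hb2
      rwa [Real.sqrt_sq ha, Real.sqrt_sq hbnn] at h
    linarith
  · -- outer region
    push_neg at hcase
    set s := Real.sqrt q with hs
    set t := Real.sqrt (1-q) with ht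
    have hs2 : s^2 = q := Real.sq_sqrt h0.le
    have ht2 : t^2 = 1-q := Real.sq_sqrt (by linarith)
    have hsnn : 0 ≤ s := Real.sqrt_nonneg _
    have htnn : 0 ≤ t := Real.sqrt_nonneg _
    have hb1 := logq_bound h0 h1
    have hb2 := logq_bound (q := 1-q) (by linarith) (by linarith)
    rw [show (1:ℝ)-(1-q) = q by ring] at hb2
    have hst : Real.sqrt (q*(1-q)) = s * t := Real.sqrt_mul h0.le _
    -- s*t ≤ 2L^2 - 1/2
    have hst2 : (s*t)^2 = q*(1-q) := by rw [mul_pow, hs2, ht2]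
    have hq2 : q*(1-q) ≤ (2*L^2 - 1/2)^2 := by
      have hxx : q*(1-q) = 1/4 - (q-1/2)^2 := by ring
      have hexp : (2*L^2 - 1/2)^2 = 4*L^4 - 2*L^2 + 1/4 := by ring
      rw [hxx, hexp]
      linarith
    have hc : (0:ℝ) < 2*L^2 - 1/2 := by linarith
    have hstle : s*t ≤ 2*L^2 - 1/2 := by
      rw [← hst]
      have h := Real.sqrt_le_sqrt hq2
      rwa [Real.sqrt_sq hc.le] at h
    -- s + t ≤ 2L
    have hsum : s + t ≤ 2*L := by
      have h1 : (s+t)^2 ≤ (2*L)^2 := by nlinarith [hstle, hs2, ht2]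
      have h := Real.sqrt_le_sqrt h1
      rwa [Real.sqrt_sq (add_nonneg hsnn htnn), Real.sqrt_sq (by linarith)] at h
    have hkey : s*(1-q) + t*q ≤ 2 * L * (s*t) := by
      have : s*(1-q) + t*q = (s*t)*(s+t) := by
        rw [← ht2, ← hs2]; ring
      rw [this]
      nlinarith [mul_nonneg hsnn htnn, mul_le_mul_of_nonneg_left hsum (mul_nonneg hsnn htnn)]
    rw [hst]
    linarith

set_option maxHeartbeats 1000000 in
theorem binEnt_le_Bh (q : ℝ) (hq : q ∈ Set.Icc (0:ℝ) 1) :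
    binEnt q ≤ 2 * Real.sqrt (q * (1 - q)) ∧
    (binEnt q = 2 * Real.sqrt (q * (1 - q)) ↔ q = 0 ∨ q = 1/2 ∨ q = 1) := by
  obtain ⟨hq0, hq1⟩ := hq
  have hlog2 : (0:ℝ) < Real.log 2 := Real.log_pos one_lt_two
  by_cases h0 : q = 0
  · subst h0
    constructor
    · norm_num [binEnt]
    · simp [binEnt]
  by_cases h1 : q = 1
  · subst h1
    constructor
    · norm_num [binEnt]
    · norm_num [binEnt]
  by_cases hh : q = 1/2
  · subst hh
    have e1 : Real.logb 2 (1/2 : ℝ) = -1 := by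
      rw [show (1:ℝ)/2 = 2⁻¹ by norm_num, Real.logb, Real.log_inv]
      field_simp
    have e2 : Real.sqrt ((1:ℝ)/2 * (1 - 1/2)) = 1/2 := by
      rw [show (1:ℝ)/2 * (1 - 1/2) = (1/2)^2 by norm_num, Real.sqrt_sq (by norm_num)]
    have e3 : binEnt (1/2 : ℝ) = 1 := by
      rw [binEnt, show (1:ℝ) - 1/2 = 1/2 by norm_num, e1]; ring
    constructor
    · rw [e3, e2]; norm_num
    · rw [e3, e2]; norm_num
  · -- strict case
    have h0' : 0 < q := lt_of_le_of_ne hq0 (Ne.symm h0)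
    have h1' : q < 1 := lt_of_le_of_ne hq1 h1
    have hb : binEnt q * Real.log 2 = -(q * Real.log q) - (1-q) * Real.log (1-q) := by
      simp only [binEnt, Real.logb]
      field_simp
    have hm := main_strict h0' h1' hh
    have hlt : binEnt q < 2 * Real.sqrt (q * (1-q)) := by
      have h2 : binEnt q * Real.log 2 < (2 * Real.sqrt (q*(1-q))) * Real.log 2 := by
        rw [hb]
        calc -(q * Real.log q) - (1-q) * Real.log (1-q)
            < 2 * Real.log 2 * Real.sqrt (q*(1-q)) := hm
          _ = (2 * Real.sqrt (q*(1-q))) * Real.log 2 := by ring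
      exact (mul_lt_mul_iff_of_pos_right hlog2).mp h2
    refine ⟨hlt.le, ?_, ?_⟩
    · intro heq
      exact absurd heq (ne_of_lt hlt)
    · rintro (h | h | h) <;> [exact absurd h h0; exact absurd h hh; exact absurd h h1]
end

section
/- For all u ∈ [0,1], φ(u) ≥ u², with equality if and only if u ∈ {0,1}, where φ(u) = H((1 - √(1-u²))/2). -/
open Real

noncomputable def gg (x : ℝ) : ℝ :=
  2 * Real.log 2 * x ^ 2 - (1 + x) * Real.log (1 + x) - (1 - x) * Real.log (1 - x)

noncomputable def gg' (x : ℝ) : ℝ :=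
  4 * Real.log 2 * x - Real.log (1 + x) + Real.log (1 - x)

lemma log2_gt_half : (1/2 : ℝ) < Real.log 2 := by
  have := Real.log_two_gt_d9
  linarith

lemma gg_cont : Continuous gg := by
  have h1 : Continuous fun x : ℝ => (1 + x) * Real.log (1 + x) :=
    Real.continuous_mul_log.comp (continuous_const.add continuous_id)
  have h2 : Continuous fun x : ℝ => (1 - x) * Real.log (1 - x) :=
    Real.continuous_mul_log.comp (continuous_const.sub continuous_id)
  exact ((continuous_const.mul (continuous_pow 2)).sub h1).sub h2

lemma gg_hasDeriv {x : ℝ} (h1 : -1 < x) (h2 : x < 1) : HasDerivAt gg (gg' x) x := by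
  have hp : (0:ℝ) < 1 + x := by linarith
  have hm : (0:ℝ) < 1 - x := by linarith
  have A : HasDerivAt (fun x : ℝ => 1 + x) 1 x := by
    simpa using (hasDerivAt_id x).const_add (1:ℝ)
  have B : HasDerivAt (fun x : ℝ => 1 - x) (-1) x := by
    simpa using (hasDerivAt_id x).const_sub (1:ℝ)
  have LA : HasDerivAt (fun x : ℝ => Real.log (1 + x)) (1 / (1 + x)) x := A.log hp.ne'
  have LB : HasDerivAt (fun x : ℝ => Real.log (1 - x)) (-1 / (1 - x)) x := B.log hm.ne'
  have PA : HasDerivAt (fun x : ℝ => (1 + x) * Real.log (1 + x))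
      (1 * Real.log (1 + x) + (1 + x) * (1 / (1 + x))) x := A.mul LA
  have PB : HasDerivAt (fun x : ℝ => (1 - x) * Real.log (1 - x))
      ((-1) * Real.log (1 - x) + (1 - x) * (-1 / (1 - x))) x := B.mul LB
  have Q : HasDerivAt (fun x : ℝ => 2 * Real.log 2 * x ^ 2) (2 * Real.log 2 * (2 * x)) x := by
    simpa using ((hasDerivAt_pow 2 x).const_mul (2 * Real.log 2))
  have := (Q.sub PA).sub PB
  refine this.congr_deriv ?_
  have e1 : (1 + x) * (1 / (1 + x)) = 1 := by field_simp
  have e2 : (1 - x) * (-1 / (1 - x)) = -1 := by field_simp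
  rw [e1, e2]; unfold gg'; ring

lemma gg'_hasDeriv {x : ℝ} (h1 : -1 < x) (h2 : x < 1) :
    HasDerivAt gg' (4 * Real.log 2 - 1 / (1 + x) - 1 / (1 - x)) x := by
  have hp : (0:ℝ) < 1 + x := by linarith
  have hm : (0:ℝ) < 1 - x := by linarith
  have A : HasDerivAt (fun x : ℝ => 1 + x) 1 x := by
    simpa using (hasDerivAt_id x).const_add (1:ℝ)
  have B : HasDerivAt (fun x : ℝ => 1 - x) (-1) x := by
    simpa using (hasDerivAt_id x).const_sub (1:ℝ)
  have LA : HasDerivAt (fun x : ℝ => Real.log (1 + x)) (1 / (1 + x)) x := A.log hp.ne'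
  have LB : HasDerivAt (fun x : ℝ => Real.log (1 - x)) (-1 / (1 - x)) x := B.log hm.ne'
  have Q : HasDerivAt (fun x : ℝ => 4 * Real.log 2 * x) (4 * Real.log 2) x := by
    simpa using (hasDerivAt_id x).const_mul (4 * Real.log 2)
  have := (Q.sub LA).add LB
  refine this.congr_deriv ?_
  ring

lemma deriv_gg_eq {x : ℝ} (h1 : -1 < x) (h2 : x < 1) : deriv gg x = gg' x :=
  (gg_hasDeriv h1 h2).deriv

/-- threshold point -/
noncomputable def xs : ℝ := Real.sqrt (1 - 1 / (2 * Real.log 2))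

lemma xs_sq : xs ^ 2 = 1 - 1 / (2 * Real.log 2) := by
  have h : (0:ℝ) ≤ 1 - 1 / (2 * Real.log 2) := by
    have := log2_gt_half
    have h2 : 1 / (2 * Real.log 2) < 1 := by
      rw [div_lt_one (by linarith)]; linarith
    linarith
  rw [xs, sq_sqrt h]

lemma xs_pos : 0 < xs := by
  have := log2_gt_half
  apply Real.sqrt_pos.2
  have h2 : 1 / (2 * Real.log 2) < 1 := by
    rw [div_lt_one (by linarith)]; linarith
  linarith

lemma xs_lt_one : xs < 1 := by
  have := log2_gt_half
  have h0 : 0 < 1 / (2 * Real.log 2) := by positivity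
  have : (1:ℝ) - 1 / (2 * Real.log 2) < 1 := by linarith
  have hnn : (0:ℝ) ≤ 1 - 1 / (2 * Real.log 2) := by
    have h2 : 1 / (2 * Real.log 2) < 1 := by
      rw [div_lt_one (by linarith)]; linarith
    linarith
  calc xs < Real.sqrt 1 := Real.sqrt_lt_sqrt hnn this
    _ = 1 := Real.sqrt_one

lemma deriv2_formula {x : ℝ} (h1 : -1 < x) (h2 : x < 1) :
    4 * Real.log 2 - 1 / (1 + x) - 1 / (1 - x)
      = 4 * Real.log 2 - 2 / (1 - x ^ 2) := by
  have hp : (0:ℝ) < 1 + x := by linarith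
  have hm : (0:ℝ) < 1 - x := by linarith
  rw [show (1:ℝ) - x ^ 2 = (1 + x) * (1 - x) by ring]
  field_simp
  ring

lemma gg'_pos {x : ℝ} (hx : x ∈ Set.Ioc (0:ℝ) xs) : 0 < gg' x := by
  have hxs1 := xs_lt_one
  have hL := log2_gt_half
  have mono : StrictMonoOn gg' (Set.Icc 0 xs) := by
    apply strictMonoOn_of_deriv_pos (convex_Icc 0 xs)
    · intro y hy
      exact (gg'_hasDeriv (by linarith [hy.1]) (by linarith [hy.2])).continuousAt.continuousWithinAt
    · intro y hy
      rw [interior_Icc] at hy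
      have hy1 : (0:ℝ) < y := hy.1
      have hy2 : y < xs := hy.2
      have hder := (gg'_hasDeriv (by linarith) (by linarith)).deriv
      rw [hder, deriv2_formula (by linarith) (by linarith)]
      have hsq : y ^ 2 < xs ^ 2 := by
        have := sq_lt_sq' (by linarith) hy2
        simpa using this
      rw [xs_sq] at hsq
      have hpos : 1 / (2 * Real.log 2) < 1 - y ^ 2 := by linarith
      have h0 : (0:ℝ) < 1 / (2 * Real.log 2) := by positivity
      have h1y : (0:ℝ) < 1 - y ^ 2 := by linarith
      have : 2 / (1 - y ^ 2) < 2 / (1 / (2 * Real.log 2)) :=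
        div_lt_div_of_pos_left (by norm_num) h0 hpos
      have heq : 2 / (1 / (2 * Real.log 2)) = 4 * Real.log 2 := by
        field_simp; ring
      linarith [heq ▸ this]
  have h0 : gg' 0 = 0 := by unfold gg'; simp
  have := mono (Set.left_mem_Icc.2 (by linarith [xs_pos])) ⟨hx.1.le, hx.2⟩ hx.1
  rw [h0] at this
  exact this

lemma gg_zero : gg 0 = 0 := by unfold gg; simp

lemma gg_one : gg 1 = 0 := by
  unfold gg
  norm_num

lemma gg_pos_left {x : ℝ} (hx : x ∈ Set.Ioc (0:ℝ) xs) : 0 < gg x := by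
  have hxs1 := xs_lt_one
  have mono : StrictMonoOn gg (Set.Icc 0 xs) := by
    apply strictMonoOn_of_deriv_pos (convex_Icc 0 xs) (gg_cont.continuousOn)
    intro y hy
    rw [interior_Icc] at hy
    rw [deriv_gg_eq (by linarith [hy.1]) (by linarith [hy.2])]
    exact gg'_pos ⟨hy.1, hy.2.le⟩
  have := mono (Set.left_mem_Icc.2 (by linarith [xs_pos])) ⟨hx.1.le, hx.2⟩ hx.1
  rwa [gg_zero] at this

lemma gg_concave : StrictConcaveOn ℝ (Set.Icc xs 1) gg := by
  apply strictConcaveOn_of_deriv2_neg (convex_Icc xs 1) gg_cont.continuousOn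
  intro y hy
  rw [interior_Icc] at hy
  have hxs := xs_pos
  have hy1 : xs < y := hy.1
  have hy2 : y < 1 := hy.2
  have hyo : (0:ℝ) < y := lt_trans hxs hy1
  have hEq : deriv (deriv gg) y = deriv gg' y := by
    apply Filter.EventuallyEq.deriv_eq
    filter_upwards [Ioo_mem_nhds (show (-1:ℝ) < y by linarith) hy2] with z hz
    exact deriv_gg_eq hz.1 hz.2
  show deriv^[2] gg y < 0
  rw [Function.iterate_succ, Function.iterate_one, Function.comp_apply] at *
  rw [hEq, (gg'_hasDeriv (by linarith) (by linarith)).deriv,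
    deriv2_formula (by linarith) (by linarith)]
  have hsq : xs ^ 2 < y ^ 2 := by
    have := sq_lt_sq' (by linarith) hy1
    simpa using this
  rw [xs_sq] at hsq
  have h1y : (0:ℝ) < 1 - y ^ 2 := by
    have : y ^ 2 < 1 := by
      have := sq_lt_sq' (by linarith) hy2; simpa using this
    linarith
  have hL := log2_gt_half
  have hlt : 1 - y ^ 2 < 1 / (2 * Real.log 2) := by linarith
  have : 2 / (1 / (2 * Real.log 2)) < 2 / (1 - y ^ 2) :=
    div_lt_div_of_pos_left (by norm_num) h1y hlt
  have heq : 2 / (1 / (2 * Real.log 2)) = 4 * Real.log 2 := by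
    field_simp; ring
  linarith [heq ▸ this]

lemma gg_pos {x : ℝ} (hx : x ∈ Set.Ioo (0:ℝ) 1) : 0 < gg x := by
  rcases le_or_gt x xs with h | h
  · exact gg_pos_left ⟨hx.1, h⟩
  · -- x ∈ (xs, 1): use strict concavity
    have hxs1 := xs_lt_one
    have hxs0 := xs_pos
    set a : ℝ := (1 - x) / (1 - xs) with ha
    set b : ℝ := (x - xs) / (1 - xs) with hb
    have hden : (0:ℝ) < 1 - xs := by linarith
    have hapos : 0 < a := by apply div_pos <;> linarith [hx.2]
    have hbpos : 0 < b := by apply div_pos <;> linarith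
    have hab : a + b = 1 := by
      rw [ha, hb]; field_simp; ring
    have hcomb : a • xs + b • 1 = x := by
      simp only [smul_eq_mul, mul_one]
      rw [ha, hb]
      field_simp
      ring
    have hxsmem : xs ∈ Set.Icc xs 1 := Set.left_mem_Icc.2 hxs1.le
    have h1mem : (1:ℝ) ∈ Set.Icc xs 1 := Set.right_mem_Icc.2 hxs1.le
    have hne : xs ≠ (1:ℝ) := hxs1.ne
    have := gg_concave.2 hxsmem h1mem hne hapos hbpos hab
    rw [hcomb, gg_one] at this
    have hggxs : 0 < gg xs := gg_pos_left ⟨hxs0, le_refl _⟩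
    have : a * gg xs < gg x := by simpa using this
    nlinarith

lemma binEnt_formula {s : ℝ} (h0 : 0 < s) (h1 : s < 1) :
    binEnt ((1 - s) / 2)
      = 1 - ((1 + s) * Real.log (1 + s) + (1 - s) * Real.log (1 - s)) / (2 * Real.log 2) := by
  have hp : (0:ℝ) < 1 + s := by linarith
  have hm : (0:ℝ) < 1 - s := by linarith
  have hL := log2_pos
  unfold binEnt
  rw [show (1:ℝ) - (1 - s) / 2 = (1 + s) / 2 by ring]
  rw [Real.logb, Real.logb, Real.log_div hm.ne' two_ne_zero,
    Real.log_div hp.ne' two_ne_zero]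
  field_simp
  ring

lemma phi_strict {u : ℝ} (h0 : 0 < u) (h1 : u < 1) : u ^ 2 < phi u := by
  have hu2 : u ^ 2 < 1 := by nlinarith
  have hu2' : (0:ℝ) < 1 - u ^ 2 := by linarith
  set s := Real.sqrt (1 - u ^ 2) with hs
  have hs2 : s ^ 2 = 1 - u ^ 2 := Real.sq_sqrt hu2'.le
  have hs0 : 0 < s := Real.sqrt_pos.2 hu2'
  have hs1 : s < 1 := by
    nlinarith [hs2, hs0]
  have hgg : 0 < gg s := gg_pos ⟨hs0, hs1⟩
  have hphi : phi u = 1 - ((1 + s) * Real.log (1 + s) + (1 - s) * Real.log (1 - s)) / (2 * Real.log 2) := by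
    rw [phi, ← hs, binEnt_formula hs0 hs1]
  rw [hphi]
  have hu2eq : u ^ 2 = 1 - s ^ 2 := by linarith
  rw [hu2eq]
  unfold gg at hgg
  have hL := log2_pos
  rw [sub_lt_sub_iff_left, div_lt_iff₀ (by linarith)]
  nlinarith

lemma phi_zero : phi 0 = 0 := by
  unfold phi binEnt
  norm_num

lemma phi_one : phi 1 = 1 := by
  unfold phi binEnt
  norm_num
  have hlb : Real.logb 2 (1/2 : ℝ) = -1 := by
    rw [show (1:ℝ)/2 = 2⁻¹ by norm_num, Real.logb_inv,
      Real.logb_self_eq_one (by norm_num)]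
  rw [hlb]; ring

theorem phi_ge_sq (u : ℝ) (hu : u ∈ Set.Icc (0:ℝ) 1) :
    u ^ 2 ≤ phi u ∧ (phi u = u ^ 2 ↔ u = 0 ∨ u = 1) := by
  obtain ⟨hu0, hu1⟩ := hu
  rcases eq_or_lt_of_le hu0 with h0 | h0
  · subst h0
    refine ⟨by rw [phi_zero]; norm_num, by simp [phi_zero]⟩
  · rcases eq_or_lt_of_le hu1 with h1 | h1
    · subst h1
      refine ⟨by rw [phi_one]; norm_num, by simp [phi_one]⟩
    · have := phi_strict h0 h1
      refine ⟨this.le, ?_⟩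
      constructor
      · intro h; exfalso; linarith [this, h.ge]
      · rintro (rfl | rfl) <;> [exact absurd h0 (lt_irrefl 0); exact absurd h1 (lt_irrefl 1)]
end

section
/- For all q ∈ [0,1], H(q) ≥ 4q(1-q), i.e., the binary entropy is at least the square of the Bhattacharyya function B(q) = 2√(q(1-q)). -/
open Real

noncomputable def gAux (q : ℝ) : ℝ := Real.binEntropy q - 4 * Real.log 2 * (q * (1 - q))

noncomputable def gAux' (q : ℝ) : ℝ :=
  Real.log (1 - q) - Real.log q - 4 * Real.log 2 * (1 - 2 * q)

noncomputable def gAux'' (q : ℝ) : ℝ := -(1 - q)⁻¹ - q⁻¹ + 8 * Real.log 2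

lemma hasDerivAt_gAux {q : ℝ} (h0 : q ≠ 0) (h1 : q ≠ 1) :
    HasDerivAt gAux (gAux' q) q := by
  have h := (Real.hasDerivAt_binEntropy h0 h1).sub
    (((hasDerivAt_id q).mul ((hasDerivAt_const q 1).sub (hasDerivAt_id q))).const_mul
      (4 * Real.log 2))
  refine h.congr_deriv ?_
  unfold gAux'
  simp only [id, Pi.sub_apply]
  ring

lemma hasDerivAt_gAux' {q : ℝ} (h0 : q ≠ 0) (h1 : q ≠ 1) :
    HasDerivAt gAux' (gAux'' q) q := by
  have h1' : (1 : ℝ) - q ≠ 0 := sub_ne_zero.2 (Ne.symm h1)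
  have hl1 : HasDerivAt (fun x : ℝ => Real.log (1 - x)) ((1 - q)⁻¹ * (0 - 1)) q :=
    (Real.hasDerivAt_log h1').comp q ((hasDerivAt_const q 1).sub (hasDerivAt_id q))
  have h := (hl1.sub (Real.hasDerivAt_log h0)).sub
    (((hasDerivAt_const q 1).sub ((hasDerivAt_id q).const_mul 2)).const_mul (4 * Real.log 2))
  refine h.congr_deriv ?_
  unfold gAux''
  ring

lemma binEntropy_fifteen : (3 / 4 : ℝ) * Real.log 2 ≤ Real.binEntropy (15 / 64) := by
  have h1 : Real.binEntropy (15 / 64) =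
      (15 / 64 : ℝ) * Real.log (64 / 15) + (49 / 64 : ℝ) * Real.log (64 / 49) := by
    rw [Real.binEntropy]
    norm_num
  have h2 : (2 : ℝ) ^ (48 : ℕ) ≤ (64 / 15 : ℝ) ^ (15 : ℕ) * (64 / 49 : ℝ) ^ (49 : ℕ) := by
    rw [div_pow, div_pow, div_mul_div_comm, le_div_iff₀ (by positivity)]
    norm_num
  have h3 := Real.log_le_log (by positivity) h2
  rw [Real.log_pow, Real.log_mul (by positivity) (by positivity), Real.log_pow,
    Real.log_pow] at h3
  push_cast at h3
  linarith [h1]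

lemma key (q : ℝ) (h0 : 0 ≤ q) (h2 : q ≤ 1 / 2) :
    4 * Real.log 2 * (q * (1 - q)) ≤ Real.binEntropy q := by
  have hlog2l : (0.6931471803 : ℝ) < Real.log 2 := Real.log_two_gt_d9
  have hlog2u : Real.log 2 < 0.6931471808 := Real.log_two_lt_d9
  have hcontg : Continuous gAux := by
    unfold gAux
    exact Real.binEntropy_continuous.sub (by continuity)
  suffices h : 0 ≤ gAux q by unfold gAux at h; linarith
  rcases le_or_gt q (15 / 64) with hq | hq
  · -- concave part
    have hconc : ConcaveOn ℝ (Set.Icc (0 : ℝ) (15 / 64)) gAux := by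
      apply concaveOn_of_hasDerivWithinAt2_nonpos (f' := gAux') (f'' := gAux'')
        (convex_Icc _ _) hcontg.continuousOn
      · intro x hx
        rw [interior_Icc] at hx
        exact (hasDerivAt_gAux (ne_of_gt hx.1) (by linarith [hx.2])).hasDerivWithinAt
      · intro x hx
        rw [interior_Icc] at hx
        exact (hasDerivAt_gAux' (ne_of_gt hx.1) (by linarith [hx.2])).hasDerivWithinAt
      · intro x hx
        rw [interior_Icc] at hx
        obtain ⟨hx0, hx1⟩ := hx
        have hx1' : x < 1 := by linarith
        have hxx : 0 < x * (1 - x) := by nlinarith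
        have hle : x * (1 - x) ≤ 735 / 4096 := by nlinarith
        have hinv : (4096 / 735 : ℝ) ≤ (x * (1 - x))⁻¹ := by
          rw [le_inv_comm₀ (by norm_num) hxx]
          linarith
        have hne1 : (1 : ℝ) - x ≠ 0 := by linarith
        have hne0 : x ≠ 0 := ne_of_gt hx0
        have hsum : x⁻¹ + (1 - x)⁻¹ = (x * (1 - x))⁻¹ := by
          field_simp
          ring
        unfold gAux''
        nlinarith
    have h015 : (0 : ℝ) ∈ Set.Icc (0 : ℝ) (15 / 64) := by constructor <;> norm_num
    have h15 : (15 / 64 : ℝ) ∈ Set.Icc (0 : ℝ) (15 / 64) := by constructor <;> norm_num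
    have hqm : q ∈ segment ℝ (0 : ℝ) (15 / 64) := by
      rw [segment_eq_Icc (by norm_num)]
      exact ⟨h0, hq⟩
    have := hconc.ge_on_segment h015 h15 hqm
    have hg0 : gAux 0 = 0 := by simp [gAux]
    have hg15 : 0 ≤ gAux (15 / 64) := by
      unfold gAux
      have := binEntropy_fifteen
      nlinarith [hlog2l]
    rw [hg0] at this
    exact le_trans (le_min le_rfl hg15) this
  · rcases le_or_gt q (1 / 4) with hq4 | hq4
    · -- bridge
      have hmono := Real.binEntropy_strictMonoOn.monotoneOn
      have hm : Real.binEntropy (15 / 64) ≤ Real.binEntropy q := by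
        apply hmono ⟨by norm_num, by norm_num⟩ ⟨h0, by rw [show ((2:ℝ)⁻¹) = 1/2 by norm_num]; linarith⟩ hq.le
      have hb := binEntropy_fifteen
      have hqq : q * (1 - q) ≤ 3 / 16 := by nlinarith
      unfold gAux
      nlinarith [hlog2l]
    · -- antitone part on [1/4, 1/2]
      have hg'le : ∀ x ∈ Set.Icc (1 / 4 : ℝ) (1 / 2), gAux' x ≤ 0 := by
        have hmono : MonotoneOn gAux' (Set.Icc (1 / 4 : ℝ) (1 / 2)) := by
          apply monotoneOn_of_deriv_nonneg (convex_Icc _ _)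
          · intro x hx
            exact (hasDerivAt_gAux' (by rw [Set.mem_Icc] at hx; linarith)
              (by rw [Set.mem_Icc] at hx; linarith)).continuousAt.continuousWithinAt
          · intro x hx
            rw [interior_Icc] at hx
            exact (hasDerivAt_gAux' (by linarith [hx.1]) (by linarith [hx.2])).differentiableAt.differentiableWithinAt
          · intro x hx
            rw [interior_Icc] at hx
            obtain ⟨hx0, hx1⟩ := hx
            rw [(hasDerivAt_gAux' (by linarith) (by linarith)).deriv]
            have hxx : 0 < x * (1 - x) := by nlinarith
            have hge : 3 / 16 ≤ x * (1 - x) := by nlinarith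
            have hinv : (x * (1 - x))⁻¹ ≤ 16 / 3 := by
              rw [inv_le_comm₀ hxx (by norm_num)]
              linarith
            have hne1 : (1 : ℝ) - x ≠ 0 := by linarith
            have hne0 : x ≠ 0 := by linarith
            have hsum : x⁻¹ + (1 - x)⁻¹ = (x * (1 - x))⁻¹ := by
              field_simp
              ring
            unfold gAux''
            nlinarith
        intro x hx
        have h12 : (1 / 2 : ℝ) ∈ Set.Icc (1 / 4 : ℝ) (1 / 2) := by constructor <;> norm_num
        have := hmono hx h12 hx.2
        have hval : gAux' (1 / 2) = 0 := by
          unfold gAux'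
          norm_num
        linarith
      have hanti : AntitoneOn gAux (Set.Icc (1 / 4 : ℝ) (1 / 2)) := by
        apply antitoneOn_of_deriv_nonpos (convex_Icc _ _) hcontg.continuousOn
        · intro x hx
          rw [interior_Icc] at hx
          exact (hasDerivAt_gAux (by linarith [hx.1]) (by linarith [hx.2])).differentiableAt.differentiableWithinAt
        · intro x hx
          rw [interior_Icc] at hx
          rw [(hasDerivAt_gAux (by linarith [hx.1]) (by linarith [hx.2])).deriv]
          exact hg'le x ⟨hx.1.le, hx.2.le⟩
      have hmem : q ∈ Set.Icc (1 / 4 : ℝ) (1 / 2) := ⟨hq4.le, h2⟩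
      have h12 : (1 / 2 : ℝ) ∈ Set.Icc (1 / 4 : ℝ) (1 / 2) := by constructor <;> norm_num
      have := hanti hmem h12 h2
      have hval : gAux (1 / 2) = 0 := by
        unfold gAux
        have : Real.binEntropy (1 / 2) = Real.log 2 := by
          rw [show (1 / 2 : ℝ) = 2⁻¹ by norm_num, Real.binEntropy_two_inv]
        rw [this]
        ring
      linarith

theorem binEnt_ge_Bh_sq (q : ℝ) (hq : q ∈ Set.Icc (0:ℝ) 1) :
    4 * q * (1 - q) ≤ binEnt q := by
  obtain ⟨h0, h1⟩ := hq
  have hlog2 : 0 < Real.log 2 := Real.log_pos one_lt_two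
  have hbe : binEnt q * Real.log 2 = Real.binEntropy q := by
    simp only [binEnt, Real.binEntropy, Real.logb, Real.log_inv]
    field_simp
    ring
  have hkey : 4 * Real.log 2 * (q * (1 - q)) ≤ Real.binEntropy q := by
    rcases le_or_gt q (1 / 2) with h | h
    · exact key q h0 h
    · have := key (1 - q) (by linarith) (by linarith)
      rw [Real.binEntropy_one_sub] at this
      convert this using 2
      ring
  rw [← hbe] at hkey
  have : 4 * q * (1 - q) * Real.log 2 ≤ binEnt q * Real.log 2 := by linarith [hkey]
  exact le_of_mul_le_mul_right this hlog2
end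

section
/- For all u ∈ [0,1], φ(u) ≥ 1 + (u-1)/ln 2, with equality if and only if u = 1, where φ(u) = H((1 - √(1-u²))/2). -/
open Real

lemma lem_t (t : ℝ) (ht : 1 < t) : 2 * Real.log t < t - 1/t := by
  have key : StrictMonoOn (fun t : ℝ => t - 1/t - 2 * Real.log t) (Set.Ici 1) := by
    apply strictMonoOn_of_deriv_pos (convex_Ici 1)
    · apply ContinuousOn.sub
      · exact (continuousOn_id.sub (continuousOn_const.div continuousOn_id
          (fun x hx => by simp at hx; positivity)))
      · exact continuousOn_const.mul
          (Real.continuousOn_log.mono (fun x hx => by simp at hx ⊢; positivity))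
    · intro x hx
      rw [interior_Ici] at hx
      simp only [Set.mem_Ioi] at hx
      have hx0 : x ≠ 0 := by positivity
      have hd : HasDerivAt (fun t : ℝ => t - 1/t - 2 * Real.log t)
          (1 - (-(1/x^2)) - 2 * x⁻¹) x := by
        have h1 : HasDerivAt (fun t : ℝ => 1/t) (-(1/x^2)) x := by
          simpa using (hasDerivAt_inv hx0)
        exact ((hasDerivAt_id x).sub h1).sub ((Real.hasDerivAt_log hx0).const_mul 2)
      rw [hd.deriv]
      have : 1 - (-(1/x^2)) - 2 * x⁻¹ = (x-1)^2 / x^2 := by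
        field_simp; ring
      rw [this]
      have : 0 < x - 1 := by linarith
      positivity
  have h := key (Set.self_mem_Ici) (le_of_lt ht) ht
  simp at h
  have h2 : (1:ℝ)/t = t⁻¹ := one_div t
  linarith

lemma lem_atanh (s : ℝ) (h0 : 0 < s) (h1 : s < 1) :
    Real.log (1+s) - Real.log (1-s) < 2*s / Real.sqrt (1 - s^2) := by
  have hm : (0:ℝ) < 1 - s := by linarith
  have hp : (0:ℝ) < 1 + s := by linarith
  set t := Real.sqrt ((1+s)/(1-s)) with htdef
  have ht1 : 1 < t := by
    rw [htdef]
    have : (1:ℝ) < (1+s)/(1-s) := by rw [lt_div_iff₀ hm]; linarith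
    calc (1:ℝ) = Real.sqrt 1 := by simp
    _ < _ := Real.sqrt_lt_sqrt (by norm_num) this
  have ht0 : 0 < t := by linarith
  have hlog : Real.log (1+s) - Real.log (1-s) = 2 * Real.log t := by
    rw [htdef, Real.log_sqrt (by positivity), Real.log_div (by positivity) (by positivity)]
    ring
  have hs2 : Real.sqrt (1 - s^2) = Real.sqrt (1-s) * Real.sqrt (1+s) := by
    rw [← Real.sqrt_mul hm.le]; ring_nf
  have hsp : 0 < Real.sqrt (1 - s^2) := Real.sqrt_pos.2 (by nlinarith)
  have h2 : t = Real.sqrt (1+s) / Real.sqrt (1-s) := by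
    rw [htdef, Real.sqrt_div hp.le]
  have ha : (0:ℝ) < Real.sqrt (1+s) := Real.sqrt_pos.2 hp
  have hb : (0:ℝ) < Real.sqrt (1-s) := Real.sqrt_pos.2 hm
  have key : (t - 1/t) * Real.sqrt (1-s^2) = 2*s := by
    rw [h2, hs2]
    field_simp
    nlinarith [Real.sq_sqrt hp.le, Real.sq_sqrt hm.le]
  have hrhs : t - 1/t = 2*s / Real.sqrt (1 - s^2) := by
    rw [eq_div_iff hsp.ne']; exact key
  rw [hlog, ← hrhs]
  exact lem_t t ht1

lemma lem_P (s : ℝ) (h0 : 0 < s) (h1 : s ≤ 1) :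
    (1+s)*Real.log (1+s) + (1-s)*Real.log (1-s) < 2*(1 - Real.sqrt (1 - s^2)) := by
  set P : ℝ → ℝ := fun s => 2*(1 - Real.sqrt (1 - s^2))
      - ((1+s)*Real.log (1+s) + (1-s)*Real.log (1-s)) with hP
  have key : StrictMonoOn P (Set.Icc 0 1) := by
    apply strictMonoOn_of_deriv_pos (convex_Icc 0 1)
    · apply ContinuousOn.sub
      · exact (continuousOn_const.mul (continuousOn_const.sub
          ((continuous_const.sub (continuous_pow 2)).sqrt.continuousOn)))
      · have c1 : Continuous fun s : ℝ => (1+s)*Real.log (1+s) :=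
          Real.continuous_mul_log.comp (continuous_const.add continuous_id)
        have c2 : Continuous fun s : ℝ => (1-s)*Real.log (1-s) :=
          Real.continuous_mul_log.comp (continuous_const.sub continuous_id)
        exact (c1.add c2).continuousOn
    · intro x hx
      rw [interior_Icc] at hx
      obtain ⟨hx0, hx1⟩ := hx
      have hm : (0:ℝ) < 1 - x := by linarith
      have hp : (0:ℝ) < 1 + x := by linarith
      have hq : (0:ℝ) < 1 - x^2 := by nlinarith
      have hsq : (0:ℝ) < Real.sqrt (1 - x^2) := Real.sqrt_pos.2 hq
      have d1 : HasDerivAt (fun s : ℝ => 2*(1 - Real.sqrt (1 - s^2)))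
          (2 * (0 - (0 - 2*x^1) / (2 * Real.sqrt (1 - x^2)))) x := by
        have hin : HasDerivAt (fun s : ℝ => 1 - s^2) (0 - 2*x^1) x :=
          (hasDerivAt_const x 1).sub (hasDerivAt_pow 2 x)
        exact ((hasDerivAt_const x 1).sub (hin.sqrt hq.ne')).const_mul 2
      have d2 : HasDerivAt (fun s : ℝ => (1+s)*Real.log (1+s))
          (1 * Real.log (1+x) + (1+x) * (1/(1+x))) x := by
        have hin : HasDerivAt (fun s : ℝ => 1 + s) 1 x := by
          simpa using (hasDerivAt_id' x).const_add 1
        exact hin.mul (by simpa [one_div] using hin.log hp.ne')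
      have d3 : HasDerivAt (fun s : ℝ => (1-s)*Real.log (1-s))
          ((-1) * Real.log (1-x) + (1-x) * (-1/(1-x))) x := by
        have hin : HasDerivAt (fun s : ℝ => 1 - s) (-1) x := by
          simpa using (hasDerivAt_id' x).const_sub 1
        exact hin.mul (by simpa [div_eq_mul_inv] using hin.log hm.ne')
      have hd : HasDerivAt P
          (2 * (0 - (0 - 2*x^1) / (2 * Real.sqrt (1 - x^2)))
            - ((1 * Real.log (1+x) + (1+x) * (1/(1+x)))
              + ((-1) * Real.log (1-x) + (1-x) * (-1/(1-x))))) x :=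
        d1.sub (d2.add d3)
      rw [hd.deriv]
      have e1 : 2 * (0 - (0 - 2*x^1) / (2 * Real.sqrt (1 - x^2))) = 2*x / Real.sqrt (1 - x^2) := by
        field_simp; ring
      have e2 : (1 * Real.log (1+x) + (1+x) * (1/(1+x)))
          + ((-1) * Real.log (1-x) + (1-x) * (-1/(1-x)))
          = Real.log (1+x) - Real.log (1-x) := by
        field_simp; ring
      rw [e1, e2]
      have := lem_atanh x hx0 hx1
      linarith
  have h := key (Set.mem_Icc.2 ⟨le_refl 0, zero_le_one⟩) (Set.mem_Icc.2 ⟨h0.le, h1⟩) h0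
  have hP0 : P 0 = 0 := by simp [hP]
  rw [hP0] at h
  simp only [hP] at h
  linarith

theorem phi_ge_tangent (u : ℝ) (hu : u ∈ Set.Icc (0:ℝ) 1) :
    1 + (u - 1) / Real.log 2 ≤ phi u ∧
    (phi u = 1 + (u - 1) / Real.log 2 ↔ u = 1) := by
  obtain ⟨hu0, hu1⟩ := hu
  have hlog2 : (0:ℝ) < Real.log 2 := Real.log_pos (by norm_num)
  rcases eq_or_lt_of_le hu0 with h0 | h0
  · -- u = 0
    have hphi : phi u = 0 := by
      rw [← h0]
      simp [phi, binEnt]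
    have hl1 : Real.log 2 < 1 := by
      have := Real.log_lt_sub_one_of_pos (by norm_num : (0:ℝ) < 2) (by norm_num)
      linarith
    have hkey : 1 + (u - 1) / Real.log 2 < 0 := by
      rw [← h0]
      have : 1 < 1 / Real.log 2 := by rw [lt_div_iff₀ hlog2]; linarith
      have e : (0 - 1) / Real.log 2 = -(1 / Real.log 2) := by ring
      rw [e]; linarith
    refine ⟨by linarith, ?_⟩
    constructor
    · intro h; exfalso; rw [hphi] at h; linarith
    · intro h; exfalso; rw [← h0] at h; norm_num at h
  · -- 0 < u
    set s := Real.sqrt (1 - u^2) with hs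
    have hu2 : 1 - u^2 ≥ 0 := by nlinarith
    have hs0 : 0 ≤ s := Real.sqrt_nonneg _
    have hssq : s^2 = 1 - u^2 := Real.sq_sqrt hu2
    have hs1 : s < 1 := by nlinarith
    have hsu : Real.sqrt (1 - s^2) = u := by
      rw [hssq]
      have : 1 - (1 - u^2) = u^2 := by ring
      rw [this, Real.sqrt_sq hu0]
    have hm : (0:ℝ) < 1 - s := by linarith
    have hp : (0:ℝ) < 1 + s := by linarith
    have hphi : phi u = 1 - ((1+s)*Real.log (1+s) + (1-s)*Real.log (1-s))/(2*Real.log 2) := by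
      simp only [phi, binEnt, ← hs, Real.logb]
      have e1 : (1:ℝ) - (1 - s)/2 = (1+s)/2 := by ring
      rw [e1, Real.log_div hm.ne' (by norm_num), Real.log_div hp.ne' (by norm_num)]
      field_simp
      ring
    rw [hphi]
    rcases eq_or_lt_of_le hu1 with h1 | h1
    · -- u = 1
      have hs0' : s = 0 := by rw [hs, h1]; norm_num
      rw [hs0', h1]
      norm_num
    · -- u < 1
      have hspos : 0 < s := by nlinarith
      have hlt := lem_P s hspos hs1.le
      rw [hsu] at hlt
      have hdiff : 1 - ((1+s)*Real.log (1+s) + (1-s)*Real.log (1-s))/(2*Real.log 2)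
          - (1 + (u - 1) / Real.log 2)
          = (2*(1-u) - ((1+s)*Real.log (1+s) + (1-s)*Real.log (1-s)))/(2*Real.log 2) := by
        field_simp
        ring
      have hpos : 0 < (2*(1-u) - ((1+s)*Real.log (1+s) + (1-s)*Real.log (1-s)))/(2*Real.log 2) :=
        div_pos (by linarith) (by positivity)
      refine ⟨by linarith, ?_⟩
      constructor
      · intro h; exfalso; rw [h] at hdiff; simp at hdiff; linarith
      · intro h; exact absurd h (by linarith)
end

section
/- The derivative of φ at u = 1 (one-sided from the left) equals 1/ln 2, where φ(u) = H((1 - √(1-u²))/2). -/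
open Real Set Filter Topology

noncomputable def Dphi (u : ℝ) : ℝ :=
  (Real.log (1 + Real.sqrt (1 - u ^ 2)) - Real.log (1 - Real.sqrt (1 - u ^ 2)))
    / Real.sqrt (1 - u ^ 2) * u / (2 * Real.log 2)

lemma log2_ne : Real.log 2 ≠ 0 := (Real.log_pos one_lt_two).ne'

lemma binEnt_hasDerivAt {x : ℝ} (hx : x ≠ 0) (hx1 : (1 : ℝ) - x ≠ 0) :
    HasDerivAt binEnt ((Real.log (1 - x) - Real.log x) / Real.log 2) x := by
  have h1 : HasDerivAt (fun y : ℝ => y * Real.log y) (Real.log x + 1) x :=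
    Real.hasDerivAt_mul_log hx
  have h2 : HasDerivAt (fun y : ℝ => (1 - y) * Real.log (1 - y))
      ((Real.log (1 - x) + 1) * (-1)) x :=
    (Real.hasDerivAt_mul_log hx1).comp x ((hasDerivAt_id x).const_sub 1)
  have hrw : binEnt = fun y : ℝ => (-(y * Real.log y) - (1 - y) * Real.log (1 - y)) / Real.log 2 := by
    funext y; simp only [binEnt, Real.logb]; ring
  rw [hrw]
  have := (h1.neg.sub h2).div_const (Real.log 2)
  refine this.congr_deriv ?_
  ring

lemma phi_hasDerivAt_s13 {u : ℝ} (hu : u ∈ Ioo (0:ℝ) 1) : HasDerivAt phi (Dphi u) u := by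
  obtain ⟨hu0, hu1⟩ := hu
  have h1u : 0 < 1 - u ^ 2 := by nlinarith
  set s := Real.sqrt (1 - u ^ 2) with hs
  have hs0 : 0 < s := Real.sqrt_pos.2 h1u
  have hsq2 : s ^ 2 = 1 - u ^ 2 := Real.sq_sqrt h1u.le
  have hs1 : s < 1 := by nlinarith
  have hsne : s ≠ 0 := hs0.ne'
  have hsq : HasDerivAt (fun u : ℝ => Real.sqrt (1 - u ^ 2))
      (1 / (2 * s) * -(2 * u)) u := by
    have hpow : HasDerivAt (fun u : ℝ => 1 - u ^ 2) (-(2 * u)) u := by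
      have := (hasDerivAt_pow 2 u).const_sub 1
      refine this.congr_deriv ?_; push_cast; ring
    exact (Real.hasDerivAt_sqrt h1u.ne').comp u hpow
  have hq : HasDerivAt (fun u : ℝ => (1 - Real.sqrt (1 - u ^ 2)) / 2)
      (-(1 / (2 * s) * -(2 * u)) / 2) u := (hsq.const_sub 1).div_const 2
  have hqne : (1 - s) / 2 ≠ 0 := by have : (0:ℝ) < (1 - s) / 2 := by linarith
                                    exact this.ne'
  have hq1ne : (1:ℝ) - (1 - s) / 2 ≠ 0 := by
    have : (1:ℝ) - (1 - s) / 2 = (1 + s) / 2 := by ring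
    rw [this]; have : (0:ℝ) < (1 + s)/2 := by linarith
    exact this.ne'
  have hb := binEnt_hasDerivAt hqne hq1ne
  have hcomp := hb.comp u hq
  have hphi : HasDerivAt phi
      ((Real.log (1 - (1 - s) / 2) - Real.log ((1 - s) / 2)) / Real.log 2 *
        (-(1 / (2 * s) * -(2 * u)) / 2)) u := hcomp
  convert hphi using 1
  have e1 : (1:ℝ) - (1 - s) / 2 = (1 + s) / 2 := by ring
  rw [Dphi, e1, Real.log_div (by positivity) two_ne_zero,
    Real.log_div (by linarith : (0:ℝ) < 1 - s).ne' two_ne_zero]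
  field_simp
  ring

lemma Ioo_mem : Ioo (0:ℝ) 1 ∈ 𝓝[<] (1:ℝ) :=
  Ioo_mem_nhdsLT_of_mem (by norm_num : (1:ℝ) ∈ Ioc (0:ℝ) 1)

lemma hg_lim : Tendsto (fun t : ℝ => (Real.log (1 + t) - Real.log (1 - t)) / t)
    (𝓝[≠] 0) (𝓝 2) := by
  have ha : HasDerivAt (fun t : ℝ => Real.log (1 + t)) 1 0 := by
    have := (Real.hasDerivAt_log (by norm_num : (1:ℝ) + 0 ≠ 0)).comp 0
      ((hasDerivAt_id 0).const_add 1)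
    simpa [Function.comp_def] using this
  have hb : HasDerivAt (fun t : ℝ => Real.log (1 - t)) (-1) 0 := by
    have := (Real.hasDerivAt_log (by norm_num : (1:ℝ) - 0 ≠ 0)).comp 0
      ((hasDerivAt_id 0).const_sub 1)
    simpa [Function.comp_def] using this
  have hf : HasDerivAt (fun t : ℝ => Real.log (1 + t) - Real.log (1 - t)) 2 0 := by
    have := ha.sub hb
    norm_num at this
    exact this
  rw [hasDerivAt_iff_tendsto_slope] at hf
  exact hf.congr fun t => by simp [slope_def_field]

lemma hs_lim : Tendsto (fun u : ℝ => Real.sqrt (1 - u ^ 2)) (𝓝[<] 1) (𝓝[≠] 0) := by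
  rw [tendsto_nhdsWithin_iff]
  constructor
  · have hc : ContinuousAt (fun u : ℝ => Real.sqrt (1 - u ^ 2)) 1 := by fun_prop
    have h := hc.tendsto
    norm_num at h
    exact h.mono_left nhdsWithin_le_nhds
  · filter_upwards [Ioo_mem] with u hu
    have : 0 < 1 - u ^ 2 := by nlinarith [hu.1, hu.2]
    simpa using (Real.sqrt_pos.2 this).ne'

lemma Dphi_lim : Tendsto Dphi (𝓝[<] (1:ℝ)) (𝓝 (1 / Real.log 2)) := by
  have hcomp : Tendsto (fun u : ℝ =>
      (Real.log (1 + Real.sqrt (1 - u ^ 2)) - Real.log (1 - Real.sqrt (1 - u ^ 2)))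
        / Real.sqrt (1 - u ^ 2)) (𝓝[<] 1) (𝓝 2) := hg_lim.comp hs_lim
  have hid : Tendsto (fun u : ℝ => u) (𝓝[<] (1:ℝ)) (𝓝 1) :=
    tendsto_id.mono_left nhdsWithin_le_nhds
  have h := (hcomp.mul hid).div_const (2 * Real.log 2)
  have hval : (2 : ℝ) * 1 / (2 * Real.log 2) = 1 / Real.log 2 := by
    field_simp
  rw [hval] at h
  exact h

theorem phi_deriv_at_one :
    HasDerivWithinAt phi (1 / Real.log 2) (Set.Iic 1) 1 := by
  apply hasDerivWithinAt_Iic_of_tendsto_deriv (s := Ioo (0:ℝ) 1)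
  · exact fun u hu => (phi_hasDerivAt_s13 hu).differentiableAt.differentiableWithinAt
  · have hqc : ContinuousAt (fun u : ℝ => (1 - Real.sqrt (1 - u ^ 2)) / 2) 1 := by fun_prop
    have hval : (1 - Real.sqrt (1 - (1:ℝ) ^ 2)) / 2 = 1 / 2 := by norm_num
    have hbc : ContinuousAt binEnt ((1 - Real.sqrt (1 - (1:ℝ) ^ 2)) / 2) := by
      rw [hval]
      unfold binEnt
      have h1 : ContinuousAt (Real.logb 2) (1/2 : ℝ) :=
        Real.continuousAt_logb (by norm_num)
      have h2 : ContinuousAt (fun y : ℝ => Real.logb 2 (1 - y)) (1/2 : ℝ) := by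
        have := (Real.continuousAt_logb (by norm_num : (1:ℝ) - 1/2 ≠ 0) (b := 2)).comp
          (continuousAt_const.sub continuousAt_id)
        simpa [Function.comp_def] using this
      exact ((continuousAt_id.mul h1).neg).sub
        ((continuousAt_const.sub continuousAt_id).mul h2)
    have hc : ContinuousAt phi 1 :=
      ContinuousAt.comp (g := binEnt)
        (f := fun u : ℝ => (1 - Real.sqrt (1 - u ^ 2)) / 2) (x := 1) hbc hqc
    exact hc.continuousWithinAt
  · exact Ioo_mem
  · refine Tendsto.congr' ?_ Dphi_lim
    filter_upwards [Ioo_mem] with u hu using ((phi_hasDerivAt_s13 hu).deriv).symm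
end

section
/- For a binary-input discrete memoryless channel W with finite output alphabet satisfying W(y|0)+W(y|1) > 0 for every y, the symmetric capacity and Bhattacharyya parameter satisfy Z(W) ≥ 1 - I(W). -/
open Real

variable {Y : Type*} [Fintype Y]

noncomputable def symCap (W : Fin 2 → Y → ℝ) : ℝ :=
  ∑ y, ∑ x : Fin 2,
    (1/2) * W x y * Real.logb 2 (W x y / ((1/2) * W 0 y + (1/2) * W 1 y))

noncomputable def bhat (W : Fin 2 → Y → ℝ) : ℝ := ∑ y, Real.sqrt (W 0 y * W 1 y)

namespace ZAux

noncomputable def G (p : ℝ) : ℝ := 2 * Real.log 2 * Real.sqrt (p * (1 - p)) - Real.binEntropy p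

noncomputable def G' (p : ℝ) : ℝ :=
  Real.log 2 * (1 - 2 * p) / Real.sqrt (p * (1 - p)) - (Real.log (1 - p) - Real.log p)

noncomputable def G'' (p : ℝ) : ℝ :=
  (Real.sqrt (p * (1 - p)) - Real.log 2 / 2) / Real.sqrt (p * (1 - p)) ^ 3

lemma hasDerivAt_G {p : ℝ} (hp : 0 < p) (hp1 : p < 1) : HasDerivAt G (G' p) p := by
  have hpq : 0 < p * (1 - p) := by nlinarith
  have hs : Real.sqrt (p * (1 - p)) ≠ 0 := by positivity
  have h1 : HasDerivAt (fun x : ℝ => x * (1 - x)) (1 - 2 * p) p := by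
    have := (hasDerivAt_id p).mul ((hasDerivAt_const p (1:ℝ)).sub (hasDerivAt_id p))
    exact this.congr_deriv (by simp only [Pi.sub_apply, id]; ring)
  have h2 := h1.sqrt (by positivity)
  have h3 := h2.const_mul (2 * Real.log 2)
  have h4 := Real.hasDerivAt_binEntropy (ne_of_gt hp) (ne_of_lt hp1)
  have h5 := h3.sub h4
  refine h5.congr_deriv ?_
  unfold G'
  field_simp

lemma hasDerivAt_G' {p : ℝ} (hp : 0 < p) (hp1 : p < 1) : HasDerivAt G' (G'' p) p := by
  have hpq : 0 < p * (1 - p) := by nlinarith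
  have hs : (0:ℝ) < Real.sqrt (p * (1 - p)) := Real.sqrt_pos.2 hpq
  have hs2 : Real.sqrt (p * (1 - p)) ^ 2 = p * (1 - p) := Real.sq_sqrt hpq.le
  have h1 : HasDerivAt (fun x : ℝ => x * (1 - x)) (1 - 2 * p) p := by
    have := (hasDerivAt_id p).mul ((hasDerivAt_const p (1:ℝ)).sub (hasDerivAt_id p))
    exact this.congr_deriv (by simp only [Pi.sub_apply, id]; ring)
  have h2 := h1.sqrt (ne_of_gt hpq)
  -- numerator : log 2 * (1 - 2 x)
  have hnum : HasDerivAt (fun x : ℝ => Real.log 2 * (1 - 2 * x)) (Real.log 2 * (-2)) p := by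
    have := ((hasDerivAt_const p (1:ℝ)).sub ((hasDerivAt_id p).const_mul 2)).const_mul (Real.log 2)
    exact this.congr_deriv (by ring)
  have hdiv := hnum.div h2 (ne_of_gt hs)
  have hlog1 : HasDerivAt (fun x : ℝ => Real.log (1 - x)) (-(1 / (1 - p))) p := by
    have h := ((hasDerivAt_const p (1:ℝ)).sub (hasDerivAt_id p)).log (by linarith : (1:ℝ) - p ≠ 0)
    exact h.congr_deriv (by simp only [Pi.sub_apply, id]; ring)
  have hlogp : HasDerivAt Real.log (1 / p) p := by
    simpa [one_div] using Real.hasDerivAt_log (ne_of_gt hp)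
  have h5 := hdiv.sub (hlog1.sub hlogp)
  have : HasDerivAt G' ((Real.log 2 * (-2) * Real.sqrt (p * (1 - p)) -
      Real.log 2 * (1 - 2 * p) * ((1 - 2 * p) / (2 * Real.sqrt (p * (1 - p))))) /
      Real.sqrt (p * (1 - p)) ^ 2 - (-(1 / (1 - p)) - 1 / p)) p := by
    apply h5.congr_of_eventuallyEq
    filter_upwards with x
    unfold G'
    rfl
  convert this using 1
  unfold G''
  set s := Real.sqrt (p * (1 - p)) with hsdef
  have hp0 : p ≠ 0 := ne_of_gt hp
  have h1p : (1:ℝ) - p ≠ 0 := by linarith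
  have hsne : s ≠ 0 := ne_of_gt hs
  have e1 : -(1 / (1 - p)) - 1 / p = -(1 / s ^ 2) := by
    rw [hs2]; field_simp; ring
  have e2 : Real.log 2 * (-2) * s - Real.log 2 * (1 - 2 * p) * ((1 - 2 * p) / (2 * s)) =
      -(Real.log 2) / (2 * s) := by
    field_simp
    linear_combination (-4) * hs2
  rw [e1, e2]
  field_simp
  ring

lemma c_pos : 0 < Real.log 2 := Real.log_pos (by norm_num)

lemma c_lt_one : Real.log 2 < 1 := by
  have := Real.log_two_lt_d9; linarith

noncomputable def p₁ : ℝ := (1 - Real.sqrt (1 - Real.log 2 ^ 2)) / 2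

lemma h1c2 : 0 < 1 - Real.log 2 ^ 2 := by nlinarith [c_pos, c_lt_one]

lemma hsqc : Real.sqrt (1 - Real.log 2 ^ 2) ^ 2 = 1 - Real.log 2 ^ 2 :=
  Real.sq_sqrt h1c2.le

lemma hsqlt1 : Real.sqrt (1 - Real.log 2 ^ 2) < 1 := by
  have h := Real.sqrt_lt_sqrt h1c2.le (by nlinarith [c_pos] : 1 - Real.log 2 ^ 2 < 1)
  simpa using h

lemma p1_pos : 0 < p₁ := by unfold p₁; linarith [hsqlt1]

lemma p1_lt_half : p₁ < 1/2 := by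
  unfold p₁
  have : 0 < Real.sqrt (1 - Real.log 2 ^ 2) := Real.sqrt_pos.2 h1c2
  linarith

lemma p1_mul : p₁ * (1 - p₁) = Real.log 2 ^ 2 / 4 := by
  unfold p₁
  have := hsqc
  nlinarith [this]

lemma contG : Continuous G := by
  unfold G
  have h1 : Continuous fun p : ℝ => Real.sqrt (p * (1 - p)) :=
    Real.continuous_sqrt.comp (continuous_id.mul (continuous_const.sub continuous_id))
  exact (continuous_const.mul h1).sub Real.binEntropy_continuous

lemma sqrt_c2 : Real.sqrt (Real.log 2 ^ 2 / 4) = Real.log 2 / 2 := by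
  rw [show Real.log 2 ^ 2 / 4 = (Real.log 2 / 2) ^ 2 by ring]
  exact Real.sqrt_sq (by positivity)

lemma monoG' : MonotoneOn G' (Set.Icc p₁ (1 - p₁)) := by
  have hsub : ∀ x ∈ Set.Icc p₁ (1 - p₁), 0 < x ∧ x < 1 := by
    intro x hx
    constructor
    · linarith [p1_pos, hx.1]
    · linarith [p1_pos, hx.2]
  apply monotoneOn_of_hasDerivWithinAt_nonneg (f' := G'') (convex_Icc _ _)
  · intro x hx
    exact ((hasDerivAt_G' (hsub x hx).1 (hsub x hx).2).differentiableAt.continuousAt).continuousWithinAt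
  · intro x hx
    rw [interior_Icc] at hx
    exact (hasDerivAt_G' (hsub x (Set.mem_Icc_of_Ioo hx)).1
      (hsub x (Set.mem_Icc_of_Ioo hx)).2).hasDerivWithinAt
  · intro x hx
    rw [interior_Icc] at hx
    have h1 : Real.log 2 ^ 2 / 4 ≤ x * (1 - x) := by
      rw [← p1_mul]; nlinarith [hx.1, hx.2]
    have h2 : Real.log 2 / 2 ≤ Real.sqrt (x * (1 - x)) := by
      rw [← sqrt_c2]; exact Real.sqrt_le_sqrt h1
    have h3 : 0 < Real.sqrt (x * (1 - x)) := lt_of_lt_of_le (by linarith [c_pos]) h2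
    unfold G''
    apply div_nonneg (by linarith) (by positivity)

lemma G'_half : G' (1/2) = 0 := by unfold G'; norm_num

lemma G_half : G (1/2) = 0 := by
  unfold G
  rw [show (1:ℝ)/2 * (1 - 1/2) = (1/2)^2 by norm_num, Real.sqrt_sq (by norm_num)]
  rw [show (1:ℝ)/2 = (2:ℝ)⁻¹ by norm_num, Real.binEntropy_two_inv]
  ring

lemma G_zero : G 0 = 0 := by unfold G; simp

lemma antiG : AntitoneOn G (Set.Icc p₁ (1/2)) := by
  apply antitoneOn_of_hasDerivWithinAt_nonpos (f' := G') (convex_Icc _ _) contG.continuousOn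
  · intro x hx
    rw [interior_Icc] at hx
    exact (hasDerivAt_G (by linarith [p1_pos, hx.1]) (by linarith [hx.2])).hasDerivWithinAt
  · intro x hx
    rw [interior_Icc] at hx
    have hmem : x ∈ Set.Icc p₁ (1 - p₁) := ⟨hx.1.le, by linarith [hx.2, p1_lt_half]⟩
    have hhalf : (1:ℝ)/2 ∈ Set.Icc p₁ (1 - p₁) := ⟨p1_lt_half.le, by linarith [p1_lt_half]⟩
    have := monoG' hmem hhalf hx.2.le
    rw [G'_half] at this
    exact this

lemma GA : ∀ p ∈ Set.Icc p₁ (1/2), 0 ≤ G p := by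
  intro p hp
  have hhalf : (1:ℝ)/2 ∈ Set.Icc p₁ (1/2) := ⟨p1_lt_half.le, le_refl _⟩
  have := antiG hp hhalf hp.2
  rw [G_half] at this
  exact this

lemma concB : ConcaveOn ℝ (Set.Icc 0 p₁) G := by
  have hsub : ∀ x ∈ Set.Ioo (0:ℝ) p₁, 0 < x ∧ x < 1 := fun x hx =>
    ⟨hx.1, by linarith [hx.2, p1_lt_half]⟩
  have hev : ∀ x ∈ Set.Ioo (0:ℝ) p₁, deriv G =ᶠ[nhds x] G' := by
    intro x hx
    filter_upwards [Ioo_mem_nhds (hsub x hx).1 (hsub x hx).2] with y hy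
    exact (hasDerivAt_G hy.1 hy.2).deriv
  apply concaveOn_of_deriv2_nonpos (convex_Icc _ _) contG.continuousOn
  · rw [interior_Icc]
    intro x hx
    exact (hasDerivAt_G (hsub x hx).1 (hsub x hx).2).differentiableAt.differentiableWithinAt
  · rw [interior_Icc]
    intro x hx
    have hd : DifferentiableAt ℝ G' x := (hasDerivAt_G' (hsub x hx).1 (hsub x hx).2).differentiableAt
    exact (((hev x hx).differentiableAt_iff).2 hd).differentiableWithinAt
  · rw [interior_Icc]
    intro x hx
    have h2 : deriv^[2] G x = deriv (deriv G) x := rfl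
    rw [h2, (hev x hx).deriv_eq, (hasDerivAt_G' (hsub x hx).1 (hsub x hx).2).deriv]
    unfold G''
    apply div_nonpos_of_nonpos_of_nonneg _ (by positivity)
    have h1 : x * (1 - x) ≤ Real.log 2 ^ 2 / 4 := by
      rw [← p1_mul]; nlinarith [hx.1, hx.2, p1_lt_half]
    have h3 : Real.sqrt (x * (1 - x)) ≤ Real.log 2 / 2 := by
      rw [← sqrt_c2]; exact Real.sqrt_le_sqrt h1
    linarith

lemma GB : ∀ p ∈ Set.Icc (0:ℝ) p₁, 0 ≤ G p := by
  intro p hp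
  have hGp1 : 0 ≤ G p₁ := GA p₁ ⟨le_refl _, p1_lt_half.le⟩
  have hp1 := p1_pos
  set t := p / p₁ with ht
  have ht0 : 0 ≤ t := div_nonneg hp.1 hp1.le
  have ht1 : t ≤ 1 := (div_le_one hp1).2 hp.2
  have hcomb := concB.2 (Set.left_mem_Icc.2 p1_pos.le) (Set.right_mem_Icc.2 p1_pos.le)
    (by linarith : (0:ℝ) ≤ 1 - t) ht0 (by ring)
  have heq : (1 - t) • (0:ℝ) + t • p₁ = p := by
    simp [smul_eq_mul, ht]
    field_simp
  rw [heq] at hcomb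
  have : (1 - t) • G 0 + t • G p₁ = t * G p₁ := by
    rw [G_zero]; simp [smul_eq_mul]
  rw [this] at hcomb
  have : 0 ≤ t * G p₁ := mul_nonneg ht0 hGp1
  linarith

lemma G_symm (p : ℝ) : G (1 - p) = G p := by
  unfold G
  rw [Real.binEntropy_one_sub, show (1 - p) * (1 - (1 - p)) = p * (1 - p) by ring]

lemma G_nonneg : ∀ p : ℝ, 0 ≤ p → p ≤ 1 → 0 ≤ G p := by
  have half : ∀ p : ℝ, 0 ≤ p → p ≤ 1/2 → 0 ≤ G p := by
    intro p h0 hh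
    rcases le_or_gt p₁ p with h | h
    · exact GA p ⟨h, hh⟩
    · exact GB p ⟨h0, h.le⟩
  intro p h0 h1
  rcases le_or_gt p (1/2) with h | h
  · exact half p h0 h
  · rw [← G_symm p]; exact half (1 - p) (by linarith) (by linarith)

lemma binEnt_eq (p : ℝ) : binEnt p = Real.binEntropy p / Real.log 2 := by
  unfold binEnt Real.binEntropy Real.logb
  rw [Real.log_inv, Real.log_inv]
  ring

lemma binEnt_le_Bh (p : ℝ) (h0 : 0 ≤ p) (h1 : p ≤ 1) : binEnt p ≤ Bh p := by
  have hG := G_nonneg p h0 h1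
  unfold G at hG
  rw [binEnt_eq, div_le_iff₀ c_pos]
  unfold Bh
  nlinarith [hG]

lemma pointwise (a b : ℝ) (ha : 0 ≤ a) (hb : 0 ≤ b) (hab : 0 < a + b) :
    (a + b) / 2 - ((1/2) * a * Real.logb 2 (a / ((1/2) * a + (1/2) * b)) +
      (1/2) * b * Real.logb 2 (b / ((1/2) * a + (1/2) * b))) ≤ Real.sqrt (a * b) := by
  rcases eq_or_lt_of_le ha with h0 | hapos
  · have hbpos : 0 < b := by linarith [hab, h0]
    rw [← h0]
    have e : b / ((1/2) * 0 + (1/2) * b) = 2 := by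
      rw [div_eq_iff (by linarith : (1/2) * (0:ℝ) + (1/2) * b ≠ 0)]; ring
    rw [e]
    simp [Real.logb_self_eq_one (by norm_num : (1:ℝ) < 2)]
    nlinarith [Real.sqrt_nonneg (0 * b)]
  rcases eq_or_lt_of_le hb with h0 | hbpos
  · rw [← h0]
    have e : a / ((1/2) * a + (1/2) * 0) = 2 := by
      rw [div_eq_iff (by simp; linarith : (1/2) * a + (1/2) * (0:ℝ) ≠ 0)]; ring
    rw [e]
    simp [Real.logb_self_eq_one (by norm_num : (1:ℝ) < 2)]
    nlinarith [Real.sqrt_nonneg (a * 0)]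
  · set s := a + b with hsdef
    have hs : 0 < s := hab
    have hsne : s ≠ 0 := ne_of_gt hs
    have hp0 : 0 < a / s := div_pos hapos hs
    have hq0 : 0 < b / s := div_pos hbpos hs
    have hkey := binEnt_le_Bh (a / s) hp0.le (by rw [div_le_one hs]; linarith)
    have e1 : a / ((1/2) * a + (1/2) * b) = 2 * (a / s) := by
      rw [hsdef]; field_simp
    have e2 : b / ((1/2) * a + (1/2) * b) = 2 * (b / s) := by
      rw [hsdef]; field_simp
    have e3 : Real.logb 2 (2 * (a / s)) = 1 + Real.logb 2 (a / s) := by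
      rw [Real.logb_mul (by norm_num) (ne_of_gt hp0),
        Real.logb_self_eq_one (by norm_num : (1:ℝ) < 2)]
    have e4 : Real.logb 2 (2 * (b / s)) = 1 + Real.logb 2 (b / s) := by
      rw [Real.logb_mul (by norm_num) (ne_of_gt hq0),
        Real.logb_self_eq_one (by norm_num : (1:ℝ) < 2)]
    have e5 : (1:ℝ) - a / s = b / s := by
      field_simp
      rw [hsdef]; ring
    have lhs_eq : (a + b) / 2 - ((1/2) * a * Real.logb 2 (a / ((1/2) * a + (1/2) * b)) +
        (1/2) * b * Real.logb 2 (b / ((1/2) * a + (1/2) * b))) = (s/2) * binEnt (a / s) := by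
      rw [e1, e2, e3, e4]
      unfold binEnt
      rw [e5]
      field_simp
      ring
    have rhs_eq : (s/2) * Bh (a / s) = Real.sqrt (a * b) := by
      unfold Bh
      rw [e5]
      have e6 : a / s * (b / s) = a * b / s ^ 2 := by field_simp
      rw [e6, Real.sqrt_div (by positivity), Real.sqrt_sq hs.le]
      rw [Real.sqrt_mul ha]
      field_simp
    rw [lhs_eq, ← rhs_eq]
    exact mul_le_mul_of_nonneg_left hkey (by linarith)

end ZAux

theorem Z_ge_one_sub_I (W : Fin 2 → Y → ℝ)
    (hnn : ∀ x y, 0 ≤ W x y) (hsum : ∀ x, ∑ y, W x y = 1)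
    (hpos : ∀ y, 0 < W 0 y + W 1 y) :
    1 - symCap W ≤ bhat W := by
  have h1 : symCap W = ∑ y, ((1/2) * W 0 y * Real.logb 2 (W 0 y / ((1/2) * W 0 y + (1/2) * W 1 y))
      + (1/2) * W 1 y * Real.logb 2 (W 1 y / ((1/2) * W 0 y + (1/2) * W 1 y))) := by
    unfold symCap
    apply Finset.sum_congr rfl
    intro y _
    rw [Fin.sum_univ_two]
  have h2 : (1:ℝ) = ∑ y, (W 0 y + W 1 y) / 2 := by
    rw [← Finset.sum_div, Finset.sum_add_distrib, hsum 0, hsum 1]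
    norm_num
  have h3 : 1 - symCap W = ∑ y, ((W 0 y + W 1 y) / 2 -
      ((1/2) * W 0 y * Real.logb 2 (W 0 y / ((1/2) * W 0 y + (1/2) * W 1 y))
      + (1/2) * W 1 y * Real.logb 2 (W 1 y / ((1/2) * W 0 y + (1/2) * W 1 y)))) := by
    rw [h1, Finset.sum_sub_distrib, ← h2]
  rw [h3]
  unfold bhat
  apply Finset.sum_le_sum
  intro y _
  exact ZAux.pointwise (W 0 y) (W 1 y) (hnn 0 y) (hnn 1 y) (hpos y)
end

section
/- For a binary-input discrete memoryless channel W (finite output alphabet, W(y|0)+W(y|1) > 0 for all y), I(W) + Z(W)² ≤ 1, with equality if and only if Z(W) ∈ {0,1}. -/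
open Real

variable {Y : Type*} [Fintype Y]

open Set

noncomputable def Ffun (t : ℝ) : ℝ :=
  2*t^2*Real.log 2 - ((1+t)*Real.log (1+t) + (1-t)*Real.log (1-t))

noncomputable def Fd (t : ℝ) : ℝ :=
  4*t*Real.log 2 - Real.log (1+t) + Real.log (1-t)

lemma hasDerivAt_Ffun {t : ℝ} (h1 : -1 < t) (h2 : t < 1) :
    HasDerivAt Ffun (Fd t) t := by
  have h1p : (0:ℝ) < 1 + t := by linarith
  have h2p : (0:ℝ) < 1 - t := by linarith
  have d1 : HasDerivAt (fun t : ℝ => (1+t)*Real.log (1+t)) (Real.log (1+t) + 1) t := by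
    have := (Real.hasDerivAt_mul_log (ne_of_gt h1p)).comp t
      ((hasDerivAt_id t).const_add 1)
    simpa [Function.comp_def] using this
  have d2 : HasDerivAt (fun t : ℝ => (1-t)*Real.log (1-t)) (-(Real.log (1-t) + 1)) t := by
    have := (Real.hasDerivAt_mul_log (ne_of_gt h2p)).comp t
      ((hasDerivAt_id t).const_sub 1)
    simpa [Function.comp_def] using this
  have d3 : HasDerivAt (fun t : ℝ => 2*t^2*Real.log 2) (4*t*Real.log 2) t := by
    have : HasDerivAt (fun t : ℝ => t^2) (2*t) t := by simpa using hasDerivAt_pow 2 t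
    have := (this.const_mul 2).mul_const (Real.log 2)
    exact this.congr_deriv (by ring)
  have := d3.sub (d1.add d2)
  exact this.congr_deriv (by unfold Fd; ring)

lemma hasDerivAt_Fd {t : ℝ} (h1 : -1 < t) (h2 : t < 1) :
    HasDerivAt Fd (4*Real.log 2 - 1/(1+t) - 1/(1-t)) t := by
  have h1p : (0:ℝ) < 1 + t := by linarith
  have h2p : (0:ℝ) < 1 - t := by linarith
  have d1 : HasDerivAt (fun t : ℝ => Real.log (1+t)) (1/(1+t)) t := by
    have := (Real.hasDerivAt_log (ne_of_gt h1p)).comp t ((hasDerivAt_id t).const_add 1)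
    simpa [one_div, Function.comp_def] using this
  have d2 : HasDerivAt (fun t : ℝ => Real.log (1-t)) (-(1/(1-t))) t := by
    have := (Real.hasDerivAt_log (ne_of_gt h2p)).comp t ((hasDerivAt_id t).const_sub 1)
    simpa [one_div, Function.comp_def] using this
  have d3 : HasDerivAt (fun t : ℝ => 4*t*Real.log 2) (4*Real.log 2) t := by
    have := ((hasDerivAt_id t).const_mul 4).mul_const (Real.log 2)
    exact this.congr_deriv (by ring)
  have := (d3.sub d1).add d2
  exact this.congr_deriv (by ring)

lemma two_log_two_gt_one : 1 < 2 * Real.log 2 := by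
  have := Real.log_two_gt_d9; linarith

noncomputable def cc : ℝ := Real.sqrt (1 - 1/(2*Real.log 2))

lemma cc_sq : cc^2 = 1 - 1/(2*Real.log 2) := by
  have h := two_log_two_gt_one
  have h2 : 1/(2*Real.log 2) < 1 := by
    rw [div_lt_one (by linarith)]; linarith
  rw [cc, sq]
  exact Real.mul_self_sqrt (by linarith)

lemma cc_pos : 0 < cc := by
  apply Real.sqrt_pos.2
  have h := two_log_two_gt_one
  have : 1/(2*Real.log 2) < 1 := by rw [div_lt_one (by linarith)]; linarith
  linarith

lemma cc_lt_one : cc < 1 := by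
  nlinarith [cc_sq, cc_pos, two_log_two_gt_one,
    one_div_pos.2 (show (0:ℝ) < 2*Real.log 2 by linarith [two_log_two_gt_one])]

lemma Ffun_continuous : Continuous Ffun := by
  unfold Ffun
  have h1 : Continuous fun t : ℝ => (1+t)*Real.log (1+t) :=
    Real.continuous_mul_log.comp (continuous_const.add continuous_id)
  have h2 : Continuous fun t : ℝ => (1-t)*Real.log (1-t) :=
    Real.continuous_mul_log.comp (continuous_const.sub continuous_id)
  fun_prop

lemma Fd_continuousOn : ContinuousOn Fd (Icc 0 cc) := by
  have hsub : Icc (0:ℝ) cc ⊆ {t | -1 < t ∧ t < 1} := by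
    intro x hx
    exact ⟨by linarith [hx.1], lt_of_le_of_lt hx.2 cc_lt_one⟩
  intro x hx
  exact ((hasDerivAt_Fd (hsub hx).1 (hsub hx).2).continuousAt).continuousWithinAt

lemma Fd_deriv_pos {x : ℝ} (h0 : 0 < x) (h1 : x < cc) :
    0 < 4*Real.log 2 - 1/(1+x) - 1/(1-x) := by
  have hL := Real.log_two_gt_d9
  have hx1 : x < 1 := lt_trans h1 cc_lt_one
  have hx2 : x^2 < cc^2 := by nlinarith [cc_pos]
  have hc := cc_sq
  have hLpos : (0:ℝ) < 2*Real.log 2 := by linarith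
  have h2 : 1/(2*Real.log 2) < 1 - x^2 := by rw [hc] at hx2; linarith
  have hpos : (0:ℝ) < 1 - x^2 := lt_trans (by positivity) h2
  have h3 : (1:ℝ) < (2*Real.log 2) * (1 - x^2) := by
    rw [div_lt_iff₀ hLpos] at h2; linarith
  have hne1 : (1:ℝ)+x ≠ 0 := by nlinarith
  have hne2 : (1:ℝ)-x ≠ 0 := by nlinarith
  have hne3 : (1:ℝ)-x^2 ≠ 0 := ne_of_gt hpos
  have h4 : 1/(1+x) + 1/(1-x) = 2/(1-x^2) := by
    rw [div_add_div _ _ hne1 hne2, div_eq_div_iff (mul_ne_zero hne1 hne2) hne3]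
    ring
  have h5 : 2/(1-x^2) < 4*Real.log 2 := by
    rw [div_lt_iff₀ hpos]; nlinarith
  linarith [h4, h5]

lemma Fd_nonneg_deriv_nonpos {x : ℝ} (h0 : cc < x) (h1 : x < 1) :
    4*Real.log 2 - 1/(1+x) - 1/(1-x) ≤ 0 := by
  have hL := Real.log_two_gt_d9
  have hx0 : 0 < x := lt_trans cc_pos h0
  have hx2 : cc^2 < x^2 := by nlinarith [cc_pos]
  have hc := cc_sq
  have hLpos : (0:ℝ) < 2*Real.log 2 := by linarith
  have h2 : 1 - x^2 < 1/(2*Real.log 2) := by rw [hc] at hx2; linarith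
  have hpos : (0:ℝ) < 1 - x^2 := by nlinarith
  have h3 : (2*Real.log 2) * (1 - x^2) < 1 := by
    rw [lt_div_iff₀ hLpos] at h2; linarith
  have hne1 : (1:ℝ)+x ≠ 0 := by nlinarith
  have hne2 : (1:ℝ)-x ≠ 0 := by nlinarith
  have hne3 : (1:ℝ)-x^2 ≠ 0 := ne_of_gt hpos
  have h4 : 1/(1+x) + 1/(1-x) = 2/(1-x^2) := by
    rw [div_add_div _ _ hne1 hne2, div_eq_div_iff (mul_ne_zero hne1 hne2) hne3]
    ring
  have h5 : 4*Real.log 2 < 2/(1-x^2) := by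
    rw [lt_div_iff₀ hpos]; nlinarith
  linarith [h4, h5]

lemma Fd_pos {t : ℝ} (h0 : 0 < t) (h1 : t ≤ cc) : 0 < Fd t := by
  have hmono : StrictMonoOn Fd (Icc 0 cc) := by
    apply strictMonoOn_of_deriv_pos (convex_Icc 0 cc) Fd_continuousOn
    intro x hx
    rw [interior_Icc] at hx
    rw [(hasDerivAt_Fd (by linarith [hx.1]) (by linarith [hx.2, cc_lt_one])).deriv]
    exact Fd_deriv_pos hx.1 hx.2
  have h := hmono (by constructor <;> [rfl; exact le_of_lt cc_pos])
    ⟨le_of_lt h0, h1⟩ h0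
  simpa [Fd] using h

lemma Ffun_pos_left {t : ℝ} (h0 : 0 < t) (h1 : t ≤ cc) : 0 < Ffun t := by
  have hmono : StrictMonoOn Ffun (Icc 0 cc) := by
    apply strictMonoOn_of_deriv_pos (convex_Icc 0 cc) Ffun_continuous.continuousOn
    intro x hx
    rw [interior_Icc] at hx
    rw [(hasDerivAt_Ffun (by linarith [hx.1]) (by linarith [hx.2, cc_lt_one])).deriv]
    exact Fd_pos hx.1 (le_of_lt hx.2)
  have h := hmono (by constructor <;> [rfl; exact le_of_lt cc_pos])
    ⟨le_of_lt h0, h1⟩ h0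
  simpa [Ffun] using h

lemma Ffun_one : Ffun 1 = 0 := by
  norm_num [Ffun]

lemma Ffun_concave : ConcaveOn ℝ (Icc cc 1) Ffun := by
  apply concaveOn_of_hasDerivWithinAt2_nonpos (convex_Icc cc 1)
    Ffun_continuous.continuousOn (f' := Fd)
    (f'' := fun x => 4*Real.log 2 - 1/(1+x) - 1/(1-x))
  · intro x hx
    rw [interior_Icc] at hx
    exact (hasDerivAt_Ffun (by linarith [hx.1, cc_pos]) hx.2).hasDerivWithinAt
  · intro x hx
    rw [interior_Icc] at hx
    exact (hasDerivAt_Fd (by linarith [hx.1, cc_pos]) hx.2).hasDerivWithinAt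
  · intro x hx
    rw [interior_Icc] at hx
    exact Fd_nonneg_deriv_nonpos hx.1 hx.2

lemma Ffun_pos {t : ℝ} (h0 : 0 < t) (h1 : t < 1) : 0 < Ffun t := by
  rcases le_or_gt t cc with h | h
  · exact Ffun_pos_left h0 h
  · have hc1 : cc < 1 := cc_lt_one
    have hne : (1:ℝ) - cc ≠ 0 := by linarith
    set l := (t - cc)/(1 - cc) with hl
    have hl0 : 0 < l := by apply div_pos <;> linarith
    have hl1 : l < 1 := by rw [hl, div_lt_one (by linarith)]; linarith
    have hcomb : (1-l) • cc + l • (1:ℝ) = t := by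
      simp only [smul_eq_mul, hl]
      field_simp
      ring
    have hkey : (1-l) • Ffun cc + l • Ffun 1 ≤ Ffun ((1-l) • cc + l • (1:ℝ)) :=
      Ffun_concave.2 ⟨le_refl cc, le_of_lt hc1⟩ ⟨le_of_lt hc1, le_refl 1⟩
        (by linarith) (le_of_lt hl0) (by ring)
    rw [hcomb, Ffun_one] at hkey
    have hFc : 0 < Ffun cc := Ffun_pos_left cc_pos (le_refl cc)
    have h2 : (1-l) * Ffun cc ≤ Ffun t := by simpa using hkey
    nlinarith

lemma Ffun_zero : Ffun 0 = 0 := by norm_num [Ffun]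

lemma Ffun_neg (t : ℝ) : Ffun (-t) = Ffun t := by
  simp only [Ffun]
  ring_nf

lemma Ffun_nonneg {t : ℝ} (h0 : -1 ≤ t) (h1 : t ≤ 1) : 0 ≤ Ffun t := by
  have key : ∀ s : ℝ, 0 ≤ s → s ≤ 1 → 0 ≤ Ffun s := by
    intro s hs0 hs1
    rcases eq_or_lt_of_le hs0 with h | h
    · rw [← h, Ffun_zero]
    rcases eq_or_lt_of_le hs1 with h' | h'
    · rw [h', Ffun_one]
    · exact le_of_lt (Ffun_pos h h')
  rcases le_or_gt 0 t with h | h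
  · exact key t h h1
  · rw [← Ffun_neg]; exact key (-t) (by linarith) (by linarith)

lemma Ffun_eq_zero_iff {t : ℝ} (h0 : -1 ≤ t) (h1 : t ≤ 1) :
    Ffun t = 0 ↔ t = -1 ∨ t = 0 ∨ t = 1 := by
  constructor
  · intro h
    by_contra hc
    push_neg at hc
    obtain ⟨hm1, h00, hp1⟩ := hc
    rcases lt_trichotomy t 0 with ht | ht | ht
    · have : 0 < Ffun (-t) := Ffun_pos (by linarith) (by
        rcases lt_or_eq_of_le h0 with h | h
        · linarith
        · exact absurd h.symm hm1)
      rw [Ffun_neg] at this; linarith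
    · exact h00 ht
    · have : 0 < Ffun t := Ffun_pos ht (by
        rcases lt_or_eq_of_le h1 with h | h
        · exact h
        · exact absurd h hp1)
      linarith
  · rintro (rfl | rfl | rfl)
    · rw [← Ffun_neg]; norm_num [Ffun_one]
    · exact Ffun_zero
    · exact Ffun_one


lemma ptwise (a b m : ℝ) (ha : 0 ≤ a) (hb : 0 ≤ b) (hab : 0 < a + b)
    (hm : m = (1/2)*a + (1/2)*b) :
    0 ≤ m - ((1/2)*a*Real.logb 2 (a/m) + (1/2)*b*Real.logb 2 (b/m) + a*b/m) ∧
    (m - ((1/2)*a*Real.logb 2 (a/m) + (1/2)*b*Real.logb 2 (b/m) + a*b/m) = 0 ↔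
      (a*b = 0 ∨ a = b)) := by
  have hm0 : 0 < m := by rw [hm]; linarith
  have hL2 : 0 < Real.log 2 := Real.log_pos one_lt_two
  set t := a/m - 1 with htdef
  have ht1 : a = m*(1+t) := by
    have h' : m * (a / m) = a := by field_simp
    rw [htdef]; linear_combination -h'
  have ht2 : b = m*(1-t) := by
    have : a + b = 2*m := by rw [hm]; ring
    nlinarith [ht1]
  have htl : -1 ≤ t := by
    have : 0 ≤ a/m := div_nonneg ha (le_of_lt hm0)
    simp [htdef]; linarith
  have htu : t ≤ 1 := by
    have hba : a ≤ 2*m := by nlinarith [ht2]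
    have : a/m ≤ 2 := by rw [div_le_iff₀ hm0]; linarith
    simp [htdef]; linarith
  have e1 : a/m = 1+t := by rw [ht1]; field_simp
  have e2 : b/m = 1-t := by rw [ht2]; field_simp
  have key : m - ((1/2)*a*Real.logb 2 (a/m) + (1/2)*b*Real.logb 2 (b/m) + a*b/m)
      = (m/(2*Real.log 2)) * Ffun t := by
    rw [Real.logb, Real.logb, e1, e2, Ffun, ht1, ht2]
    field_simp
    ring
  have hfac : 0 < m/(2*Real.log 2) := by positivity
  constructor
  · rw [key]
    exact mul_nonneg (le_of_lt hfac) (Ffun_nonneg htl htu)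
  · rw [key]
    constructor
    · intro h
      have hF : Ffun t = 0 := by
        rcases mul_eq_zero.1 h with h' | h'
        · exact absurd h' (ne_of_gt hfac)
        · exact h'
      rcases (Ffun_eq_zero_iff htl htu).1 hF with h' | h' | h'
      · left; rw [ht1, h']; ring
      · right; rw [ht1, ht2, h']; ring
      · left; rw [ht2, h']; ring
    · intro h
      have hF : Ffun t = 0 := by
        apply (Ffun_eq_zero_iff htl htu).2
        rcases h with h | h
        · rcases mul_eq_zero.1 h with h' | h'
          · left
            rw [h'] at ht1
            have : 1 + t = 0 := by
              rcases mul_eq_zero.1 ht1.symm with h'' | h''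
              · exact absurd h'' (ne_of_gt hm0)
              · exact h''
            linarith
          · right; right
            rw [h'] at ht2
            have : 1 - t = 0 := by
              rcases mul_eq_zero.1 ht2.symm with h'' | h''
              · exact absurd h'' (ne_of_gt hm0)
              · exact h''
            linarith
        · right; left
          rw [ht1, ht2] at h
          have := mul_left_cancel₀ (ne_of_gt hm0) h
          linarith
      rw [hF, mul_zero]


theorem I_add_Z_sq_le_one (W : Fin 2 → Y → ℝ)
    (hnn : ∀ x y, 0 ≤ W x y) (hsum : ∀ x, ∑ y, W x y = 1)
    (hpos : ∀ y, 0 < W 0 y + W 1 y) :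
    symCap W + (bhat W) ^ 2 ≤ 1 ∧
    (symCap W + (bhat W) ^ 2 = 1 ↔ bhat W = 0 ∨ bhat W = 1) := by
  classical
  set m : Y → ℝ := fun y => (1/2) * W 0 y + (1/2) * W 1 y with hmdef
  have hm0 : ∀ y, 0 < m y := by
    intro y
    have := hpos y
    simp only [hmdef]
    linarith
  have hsm : ∑ y, m y = 1 := by
    simp only [hmdef]
    rw [Finset.sum_add_distrib, ← Finset.mul_sum, ← Finset.mul_sum, hsum 0, hsum 1]
    norm_num
  have hpt : ∀ y, 0 ≤ m y - ((1/2)*W 0 y*Real.logb 2 (W 0 y/m y)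
        + (1/2)*W 1 y*Real.logb 2 (W 1 y/m y) + W 0 y*W 1 y/m y) ∧
      (m y - ((1/2)*W 0 y*Real.logb 2 (W 0 y/m y)
        + (1/2)*W 1 y*Real.logb 2 (W 1 y/m y) + W 0 y*W 1 y/m y) = 0 ↔
        (W 0 y * W 1 y = 0 ∨ W 0 y = W 1 y)) :=
    fun y => ptwise (W 0 y) (W 1 y) (m y) (hnn 0 y) (hnn 1 y) (hpos y) rfl
  set D : Y → ℝ := fun y => m y - ((1/2)*W 0 y*Real.logb 2 (W 0 y/m y)
      + (1/2)*W 1 y*Real.logb 2 (W 1 y/m y) + W 0 y*W 1 y/m y) with hDdef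
  have hD0 : ∀ y, 0 ≤ D y := fun y => (hpt y).1
  have hDiff : ∀ y, (D y = 0 ↔ W 0 y * W 1 y = 0 ∨ W 0 y = W 1 y) := fun y => (hpt y).2
  have hsymCap : symCap W = ∑ y, ((1/2)*W 0 y*Real.logb 2 (W 0 y/m y)
      + (1/2)*W 1 y*Real.logb 2 (W 1 y/m y)) := by
    unfold symCap
    apply Finset.sum_congr rfl
    intro y _
    rw [Fin.sum_univ_two]
  have hkey : symCap W + (∑ y, W 0 y * W 1 y / m y) + (∑ y, D y) = 1 := by
    have e : ∑ y, ((1/2)*W 0 y*Real.logb 2 (W 0 y/m y)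
        + (1/2)*W 1 y*Real.logb 2 (W 1 y/m y) + W 0 y * W 1 y / m y + D y)
        = ∑ y, m y :=
      Finset.sum_congr rfl (fun y _ => by simp only [hDdef]; ring)
    rw [hsymCap, ← Finset.sum_add_distrib, ← Finset.sum_add_distrib, e, hsm]
  have habm_nonneg : ∀ y, 0 ≤ W 0 y * W 1 y / m y :=
    fun y => div_nonneg (mul_nonneg (hnn 0 y) (hnn 1 y)) (le_of_lt (hm0 y))
  have hCS : (bhat W)^2 ≤ ∑ y, W 0 y * W 1 y / m y := by
    have hb : bhat W = ∑ y, Real.sqrt (m y) * Real.sqrt (W 0 y * W 1 y / m y) := by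
      unfold bhat
      apply Finset.sum_congr rfl
      intro y _
      rw [← Real.sqrt_mul (le_of_lt (hm0 y))]
      congr 1
      rw [← mul_div_assoc, mul_comm (m y), mul_div_assoc, div_self (ne_of_gt (hm0 y)), mul_one]
    rw [hb]
    calc (∑ y, Real.sqrt (m y) * Real.sqrt (W 0 y * W 1 y / m y))^2
        ≤ (∑ y, Real.sqrt (m y)^2) * (∑ y, Real.sqrt (W 0 y * W 1 y / m y)^2) :=
          Finset.sum_mul_sq_le_sq_mul_sq _ _ _
      _ = ∑ y, W 0 y * W 1 y / m y := by
          have e1 : ∑ y, Real.sqrt (m y)^2 = 1 := by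
            rw [← hsm]
            exact Finset.sum_congr rfl (fun y _ => Real.sq_sqrt (le_of_lt (hm0 y)))
          have e2 : ∑ y, Real.sqrt (W 0 y * W 1 y / m y)^2
              = ∑ y, W 0 y * W 1 y / m y :=
            Finset.sum_congr rfl (fun y _ => Real.sq_sqrt (habm_nonneg y))
          rw [e1, e2, one_mul]
  have hDsum : 0 ≤ ∑ y, D y := Finset.sum_nonneg (fun y _ => hD0 y)
  have hmain : symCap W + (bhat W) ^ 2 ≤ 1 := by linarith
  refine ⟨hmain, ?_, ?_⟩
  · -- equality → bhat ∈ {0,1}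
    intro heq
    have hDzero : ∑ y, D y = 0 := by linarith
    have hbsq : (bhat W)^2 = ∑ y, W 0 y * W 1 y / m y := by linarith
    have hDy : ∀ y, D y = 0 := by
      intro y
      exact (Finset.sum_eq_zero_iff_of_nonneg (fun y _ => hD0 y)).1 hDzero y
        (Finset.mem_univ y)
    have hptw : ∀ y, Real.sqrt (W 0 y * W 1 y) = W 0 y * W 1 y / m y := by
      intro y
      rcases (hDiff y).1 (hDy y) with h | h
      · rw [h]
        simp
      · rw [← h, Real.sqrt_mul_self (hnn 0 y)]
        have hm_eq : m y = W 0 y := by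
          simp only [hmdef]
          rw [← h]
          ring
        rw [hm_eq]
        rcases eq_or_ne (W 0 y) 0 with h0 | h0
        · rw [h0]; simp
        · field_simp
    have hbb : bhat W = ∑ y, W 0 y * W 1 y / m y := by
      unfold bhat
      exact Finset.sum_congr rfl (fun y _ => hptw y)
    have hsq : bhat W * (bhat W - 1) = 0 := by
      have : (bhat W)^2 = bhat W := by rw [hbsq, ← hbb]
      nlinarith [this]
    rcases mul_eq_zero.1 hsq with h | h
    · exact Or.inl h
    · exact Or.inr (by linarith)
  · -- bhat ∈ {0,1} → equality
    rintro (h0 | h1)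
    · have hab0 : ∀ y, W 0 y * W 1 y = 0 := by
        intro y
        have hs := (Finset.sum_eq_zero_iff_of_nonneg
          (fun y _ => Real.sqrt_nonneg (W 0 y * W 1 y))).1 h0 y (Finset.mem_univ y)
        have h1' := Real.sqrt_eq_zero'.1 hs
        have h2' := mul_nonneg (hnn 0 y) (hnn 1 y)
        linarith
      have hDz : ∑ y, D y = 0 :=
        Finset.sum_eq_zero (fun y _ => (hDiff y).2 (Or.inl (hab0 y)))
      have habm : ∑ y, W 0 y * W 1 y / m y = 0 :=
        Finset.sum_eq_zero (fun y _ => by rw [hab0 y]; simp)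
      rw [h0]
      rw [hDz, habm] at hkey
      linarith
    · have habsq : ∀ y, W 0 y * W 1 y = (m y)^2 := by
        intro y
        have hle : W 0 y * W 1 y ≤ (m y)^2 := by
          simp only [hmdef]
          nlinarith [hnn 0 y, hnn 1 y, sq_nonneg (W 0 y - W 1 y)]
        have hsle : ∀ z, Real.sqrt (W 0 z * W 1 z) ≤ m z := by
          intro z
          have hle' : W 0 z * W 1 z ≤ (m z)^2 := by
            simp only [hmdef]
            nlinarith [hnn 0 z, hnn 1 z, sq_nonneg (W 0 z - W 1 z)]
          calc Real.sqrt (W 0 z * W 1 z) ≤ Real.sqrt ((m z)^2) := Real.sqrt_le_sqrt hle'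
            _ = m z := Real.sqrt_sq (le_of_lt (hm0 z))
        have hz : ∑ y, (m y - Real.sqrt (W 0 y * W 1 y)) = 0 := by
          rw [Finset.sum_sub_distrib, hsm]
          unfold bhat at h1
          rw [h1]
          ring
        have heach := (Finset.sum_eq_zero_iff_of_nonneg
          (fun z _ => by linarith [hsle z])).1 hz y (Finset.mem_univ y)
        have hsq' := Real.sq_sqrt (mul_nonneg (hnn 0 y) (hnn 1 y))
        have hms : m y = Real.sqrt (W 0 y * W 1 y) := by linarith
        rw [hms, hsq']
      have haeb : ∀ y, W 0 y = W 1 y := by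
        intro y
        have h2 := habsq y
        simp only [hmdef] at h2
        have h3 : (W 0 y - W 1 y)^2 = 0 := by linear_combination (-4)*h2
        have h4 := sq_eq_zero_iff.1 h3
        linarith
      have hDz : ∑ y, D y = 0 :=
        Finset.sum_eq_zero (fun y _ => (hDiff y).2 (Or.inr (haeb y)))
      have habm : ∑ y, W 0 y * W 1 y / m y = 1 := by
        have e : ∑ y, W 0 y * W 1 y / m y = ∑ y, m y :=
          Finset.sum_congr rfl (fun y _ => by
            rw [habsq y, sq, mul_div_assoc, div_self (ne_of_gt (hm0 y)), mul_one])
        rw [e, hsm]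
      rw [h1]
      rw [hDz, habm] at hkey
      linarith
end
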